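/- arXiv:0804.1254 — 2 statements merged into one kernel-verified Lean document; each statement's English description precedes it below -/
import Mathlib

section
/- Let S be a set of monic Lie polynomials in Lie(X) ⊆ k⟨X⟩ and let f, g ∈ S with a composition ⟨f,g⟩_w (of inclusion or of intersection, defined via the relative bracketing). Then the difference between the Lie composition ⟨f,g⟩_w and the associative composition (f,g)_w lies in the span of elements a s b with s ∈ {f,g} and a s̄ b < w in the deg-lex order. -/
open List

/-- The lexicographic order used by Shirshov: a word is *greater* than any of its
proper extensions (`w > w ++ t` for `t ≠ []`), and otherwise words are compared
letterwise by the order on the alphabet.  `LSLt u v` means `u < v`. -/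
def LSLt {X : Type*} [LinearOrder X] : List X → List X → Prop
  | _ :: _, [] => True
  | [], _ => False
  | a :: u, b :: v => a < b ∨ (a = b ∧ LSLt u v)

/-- `u ≤ v` in the Shirshov lexicographic order. -/
def LSLe {X : Type*} [LinearOrder X] (u v : List X) : Prop := u = v ∨ LSLt u v

/-- The degree-lexicographic order: compare first by length, then lexicographically. -/
def DegLt {X : Type*} [LinearOrder X] (u v : List X) : Prop :=
  u.length < v.length ∨ (u.length = v.length ∧ LSLt u v)

/-- `≤` in the degree-lexicographic order. -/
def DegLe {X : Type*} [LinearOrder X] (u v : List X) : Prop := u = v ∨ DegLt u v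

/-- An associative Lyndon–Shirshov word: a nonempty word `u` such that `vw > wv`
(lexicographically) for every factorization `u = vw` into nonempty parts. -/
def IsALSW {X : Type*} [LinearOrder X] (u : List X) : Prop :=
  u ≠ [] ∧ ∀ v w : List X, v ≠ [] → w ≠ [] → u = v ++ w → LSLt (w ++ v) (v ++ w)

/-- The underlying associative word of a non-associative word (binary bracketing). -/
def wordOf {X : Type*} : FreeMagma X → List X
  | .of x => [x]
  | .mul a b => wordOf a ++ wordOf b

/-- `w` is the longest proper suffix of `u` which is an ALSW. -/
def LongestALSWProperSuffix {X : Type*} [LinearOrder X] (u w : List X) : Prop :=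
  IsALSW w ∧ (∃ v : List X, v ≠ [] ∧ u = v ++ w) ∧
    ∀ w' : List X, IsALSW w' → (∃ v' : List X, v' ≠ [] ∧ u = v' ++ w') →
      w'.length ≤ w.length

/-- The standard (up-to-down) bracketing of an ALSW: `[x] = x` and
`[u] = [[v][w]]` where `w` is the longest proper ALSW suffix of `u`. -/
inductive IsStdBracketing {X : Type*} [LinearOrder X] : List X → FreeMagma X → Prop
  | of (x : X) : IsStdBracketing [x] (.of x)
  | mul {v w : List X} {tv tw : FreeMagma X} :
      IsALSW (v ++ w) → LongestALSWProperSuffix (v ++ w) w →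
      IsStdBracketing v tv → IsStdBracketing w tw →
      IsStdBracketing (v ++ w) (tv * tw)

/-- A non-associative Lyndon–Shirshov word, via Shirshov's conditions:
the underlying word is an ALSW, both halves are NLSWs, and the right factor of
the left half is `≤` the right half. -/
inductive IsNLSW {X : Type*} [LinearOrder X] : FreeMagma X → Prop
  | of (x : X) : IsNLSW (.of x)
  | mul {tv tw : FreeMagma X} :
      IsNLSW tv → IsNLSW tw → IsALSW (wordOf (tv * tw)) →
      (∀ t₁ t₂ : FreeMagma X, tv = t₁ * t₂ → LSLe (wordOf t₂) (wordOf tw)) →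
      IsNLSW (tv * tw)

/-- The free associative algebra `k⟨X⟩`, realized as the monoid algebra of the
free monoid on `X`. -/
abbrev FreeAssocAlg (k X : Type*) [Field k] := MonoidAlgebra k (FreeMonoid X)

/-- The monomial of `k⟨X⟩` corresponding to a word `u ∈ X*`. -/
noncomputable def monom (k : Type*) [Field k] {X : Type*} (u : List X) : FreeAssocAlg k X :=
  MonoidAlgebra.single (FreeMonoid.ofList u) 1

/-- The coefficient of the word `u` in `f ∈ k⟨X⟩`. -/
def coeffW {k X : Type*} [Field k] (f : FreeAssocAlg k X) (u : List X) : k :=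
  f.coeff (FreeMonoid.ofList u)

/-- `u` is the leading word of `f` with respect to the deg-lex order. -/
def IsLeadingWord {k X : Type*} [Field k] [LinearOrder X]
    (f : FreeAssocAlg k X) (u : List X) : Prop :=
  coeffW f u ≠ 0 ∧ ∀ w : List X, coeffW f w ≠ 0 → w = u ∨ DegLt w u

/-- `f` is monic: its leading coefficient is `1`. -/
def IsMonic {k X : Type*} [Field k] [LinearOrder X] (f : FreeAssocAlg k X) : Prop :=
  ∃ u : List X, IsLeadingWord f u ∧ coeffW f u = 1

/-- The generator `x ∈ X` inside `k⟨X⟩`. -/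
noncomputable def gen (k : Type*) [Field k] {X : Type*} (x : X) : FreeAssocAlg k X :=
  monom k [x]

attribute [local instance 100] LieRing.ofAssociativeRing

/-- The free Lie algebra `Lie(X)`: the Lie subalgebra of `k⟨X⟩` generated by `X`
under the commutator bracket. -/
noncomputable def LieX (k X : Type*) [Field k] : LieSubalgebra k (FreeAssocAlg k X) :=
  LieSubalgebra.lieSpan k _ (Set.range (gen k (X := X)))

/-- Evaluation of a non-associative word in `k⟨X⟩`, interpreting the binary
operation as the commutator `(ab) = ab - ba`. -/
noncomputable def evalC {k X : Type*} [Field k] : FreeMagma X → FreeAssocAlg k X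
  | .of x => gen k x
  | .mul a b => evalC a * evalC b - evalC b * evalC a

/-- `SubtreeAt s a d t`: `s` occurs as a (bracketed) subtree of `t`, with the word
`a` to its left and the word `d` to its right. -/
inductive SubtreeAt {X : Type*} : FreeMagma X → List X → List X → FreeMagma X → Prop
  | refl (t : FreeMagma X) : SubtreeAt t [] [] t
  | left {s : FreeMagma X} {a d : List X} {t₁ : FreeMagma X} (t₂ : FreeMagma X) :
      SubtreeAt s a d t₁ → SubtreeAt s a (d ++ wordOf t₂) (t₁ * t₂)
  | right {s : FreeMagma X} {a d : List X} {t₂ : FreeMagma X} (t₁ : FreeMagma X) :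
      SubtreeAt s a d t₂ → SubtreeAt s (wordOf t₁ ++ a) d (t₁ * t₂)

/-- `ReplaceAt s s' a d t t'`: `t'` is obtained from `t` by replacing the subtree
`s`, occurring at position `(a, d)`, by `s'`. -/
inductive ReplaceAt {X : Type*} (s s' : FreeMagma X) :
    List X → List X → FreeMagma X → FreeMagma X → Prop
  | refl : ReplaceAt s s' [] [] s s'
  | left {a d : List X} {t₁ t₁' : FreeMagma X} (t₂ : FreeMagma X) :
      ReplaceAt s s' a d t₁ t₁' → ReplaceAt s s' a (d ++ wordOf t₂) (t₁ * t₂) (t₁' * t₂)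
  | right {a d : List X} {t₂ t₂' : FreeMagma X} (t₁ : FreeMagma X) :
      ReplaceAt s s' a d t₂ t₂' →
      ReplaceAt s s' (wordOf t₁ ++ a) d (t₁ * t₂) (t₁ * t₂')

/-- The left-normed product `[[[t₀ t₁] t₂] ⋯ tₙ]`. -/
def leftComb {X : Type*} (t₀ : FreeMagma X) (ts : List (FreeMagma X)) : FreeMagma X :=
  ts.foldl (· * ·) t₀

/-- `cs` is the non-decreasing Lyndon factorization of `c`. -/
def LyndonFactorization {X : Type*} [LinearOrder X] (c : List X) (cs : List (List X)) : Prop :=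
  c = cs.flatten ∧ (∀ w ∈ cs, IsALSW w) ∧ cs.Chain' LSLe

/-- `EvalSub k f s a d t h`: evaluating the bracketing `t` in `k⟨X⟩` (via
commutators), except that its subtree `s` at position `(a, d)` is replaced by the
polynomial `f`, gives the value `h`. -/
inductive EvalSub (k : Type*) [Field k] {X : Type*} [LinearOrder X] (f : FreeAssocAlg k X) :
    FreeMagma X → List X → List X → FreeMagma X → FreeAssocAlg k X → Prop
  | refl (s : FreeMagma X) : EvalSub k f s [] [] s f
  | left {s : FreeMagma X} {a d : List X} {t₁ : FreeMagma X} {h : FreeAssocAlg k X}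
      (t₂ : FreeMagma X) : EvalSub k f s a d t₁ h →
      EvalSub k f s a (d ++ wordOf t₂) (t₁ * t₂) (h * evalC t₂ - evalC t₂ * h)
  | right {s : FreeMagma X} {a d : List X} {t₂ : FreeMagma X} {h : FreeAssocAlg k X}
      (t₁ : FreeMagma X) : EvalSub k f s a d t₂ h →
      EvalSub k f s (wordOf t₁ ++ a) d (t₁ * t₂) (evalC t₁ * h - h * evalC t₁)

/-- `IsNormalSWord f fbar a b h`: `h` is the normal `S`-word `[afb]_{f̄}`, i.e. the
result of taking the relative (Shirshov special) bracketing `[a f̄ b]_{f̄}` and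
substituting the polynomial `f` for the subtree `[f̄]`. -/
def IsNormalSWord {k X : Type*} [Field k] [LinearOrder X]
    (f : FreeAssocAlg k X) (fbar a b : List X) (h : FreeAssocAlg k X) : Prop :=
  ∃ (c d : List X) (t s tv t' : FreeMagma X) (cs : List (List X)) (tcs : List (FreeMagma X)),
    b = c ++ d ∧
    IsStdBracketing (a ++ fbar ++ b) t ∧
    SubtreeAt s a d t ∧ wordOf s = fbar ++ c ∧
    IsStdBracketing fbar tv ∧
    LyndonFactorization c cs ∧
    List.Forall₂ IsStdBracketing cs tcs ∧
    ReplaceAt s (leftComb tv tcs) a d t t' ∧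
    EvalSub k f tv a (c ++ d) t' h

/-- The shape of a composition: inclusion or intersection, with context words. -/
inductive CompShape (X : Type*)
  | incl (a b : List X)
  | inter (a b : List X)

/-- The associative composition `(f,g)_w` of two monic polynomials with leading
words `f̄ = fbar`, `ḡ = gbar`. -/
def IsAssComp {k X : Type*} [Field k] (f g : FreeAssocAlg k X) (fbar gbar w : List X) :
    CompShape X → FreeAssocAlg k X → Prop
  | CompShape.incl a b, p =>
      w = fbar ∧ w = a ++ gbar ++ b ∧ p = f - monom k a * g * monom k b
  | CompShape.inter a b, p =>
      w = fbar ++ b ∧ w = a ++ gbar ∧ w.length < fbar.length + gbar.length ∧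
      p = f * monom k b - monom k a * g

/-- The Lie composition `⟨f,g⟩_w`, built from normal `S`-words via Shirshov's
special bracketing. -/
def IsLieComp {k X : Type*} [Field k] [LinearOrder X]
    (f g : FreeAssocAlg k X) (fbar gbar w : List X) :
    CompShape X → FreeAssocAlg k X → Prop
  | CompShape.incl a b, p =>
      w = fbar ∧ w = a ++ gbar ++ b ∧
      ∃ h, IsNormalSWord g gbar a b h ∧ p = f - h
  | CompShape.inter a b, p =>
      w = fbar ++ b ∧ w = a ++ gbar ∧ w.length < fbar.length + gbar.length ∧
      ∃ h₁ h₂, IsNormalSWord f fbar [] b h₁ ∧ IsNormalSWord g gbar a [] h₂ ∧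
        p = h₁ - h₂

/-- `p` is trivial modulo `(S, w)` in the associative sense: `p = Σ αᵢ aᵢ sᵢ bᵢ`
with `aᵢ s̄ᵢ bᵢ < w` in the deg-lex order. -/
def TrivialModAss {k X : Type*} [Field k] [LinearOrder X]
    (S : Set (FreeAssocAlg k X)) (w : List X) (p : FreeAssocAlg k X) : Prop :=
  ∃ (n : ℕ) (α : Fin n → k) (s : Fin n → FreeAssocAlg k X) (a b sb : Fin n → List X),
    (∀ i, s i ∈ S ∧ IsLeadingWord (s i) (sb i) ∧ DegLt (a i ++ sb i ++ b i) w) ∧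
    p = ∑ i, α i • (monom k (a i) * s i * monom k (b i))

/-- `p` is trivial modulo `(S, w)` in the Lie sense: `p = Σ αᵢ [aᵢ sᵢ bᵢ]_{s̄ᵢ}`
with `aᵢ s̄ᵢ bᵢ < w`, where the summands are normal `S`-words. -/
def TrivialModLie {k X : Type*} [Field k] [LinearOrder X]
    (S : Set (FreeAssocAlg k X)) (w : List X) (p : FreeAssocAlg k X) : Prop :=
  ∃ (n : ℕ) (α : Fin n → k) (s : Fin n → FreeAssocAlg k X) (a b sb : Fin n → List X)
    (h : Fin n → FreeAssocAlg k X),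
    (∀ i, s i ∈ S ∧ IsLeadingWord (s i) (sb i) ∧
      IsNormalSWord (s i) (sb i) (a i) (b i) (h i) ∧ DegLt (a i ++ sb i ++ b i) w) ∧
    p = ∑ i, α i • h i

/-- `S` is a Gröbner–Shirshov basis in `Lie(X)`: every Lie composition of
elements of `S` is trivial modulo `(S, w)`. -/
def IsGSBLie {k X : Type*} [Field k] [LinearOrder X] (S : Set (FreeAssocAlg k X)) : Prop :=
  ∀ (f g : FreeAssocAlg k X) (fbar gbar w : List X) (sh : CompShape X)
    (p : FreeAssocAlg k X), f ∈ S → g ∈ S →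
    IsLeadingWord f fbar → IsLeadingWord g gbar →
    IsLieComp f g fbar gbar w sh p → TrivialModLie S w p

/-- `S` is a Gröbner–Shirshov basis in `k⟨X⟩`: every associative composition of
elements of `S` is trivial modulo `(S, w)`. -/
def IsGSBAss {k X : Type*} [Field k] [LinearOrder X] (S : Set (FreeAssocAlg k X)) : Prop :=
  ∀ (f g : FreeAssocAlg k X) (fbar gbar w : List X) (sh : CompShape X)
    (p : FreeAssocAlg k X), f ∈ S → g ∈ S →
    IsLeadingWord f fbar → IsLeadingWord g gbar →
    IsAssComp f g fbar gbar w sh p → TrivialModAss S w p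

/-- `u` is `S`-reduced: it contains no subword which is the leading word of an
element of `S`. -/
def SReduced {k X : Type*} [Field k] [LinearOrder X]
    (S : Set (FreeAssocAlg k X)) (u : List X) : Prop :=
  ¬ ∃ (s : FreeAssocAlg k X) (a b sb : List X),
      s ∈ S ∧ IsLeadingWord s sb ∧ u = a ++ sb ++ b
section OrderLemmas
variable {X : Type*} [LinearOrder X]

theorem lslt_nil_left (v : List X) : ¬ LSLt ([] : List X) v := fun h => by
  simp only [LSLt] at h

theorem lslt_cons_nil (a : X) (u : List X) : LSLt (a :: u) [] := by
  simp only [LSLt]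

theorem lslt_cons_iff {a b : X} {u v : List X} :
    LSLt (a :: u) (b :: v) ↔ a < b ∨ (a = b ∧ LSLt u v) := Iff.rfl

theorem lslt_irrefl : ∀ u : List X, ¬ LSLt u u
  | [] => lslt_nil_left []
  | a :: u => fun h => by
      rcases lslt_cons_iff.1 h with h | ⟨_, h⟩
      · exact absurd h (lt_irrefl a)
      · exact lslt_irrefl u h

theorem lslt_trans : ∀ (u v z : List X), LSLt u v → LSLt v z → LSLt u z
  | [], _, _, h1, _ => absurd h1 (lslt_nil_left _)
  | _ :: _, [], _, _, h2 => absurd h2 (lslt_nil_left _)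
  | a :: u, b :: v, [], _, _ => lslt_cons_nil a u
  | a :: u, b :: v, c :: z, h1, h2 => by
      rcases lslt_cons_iff.1 h1 with hab | ⟨hab, huv⟩
      · rcases lslt_cons_iff.1 h2 with hbc | ⟨hbc, hvz⟩
        · exact lslt_cons_iff.2 (Or.inl (hab.trans hbc))
        · exact lslt_cons_iff.2 (Or.inl (hbc ▸ hab))
      · rcases lslt_cons_iff.1 h2 with hbc | ⟨hbc, hvz⟩
        · exact lslt_cons_iff.2 (Or.inl (hab ▸ hbc))
        · exact lslt_cons_iff.2 (Or.inr ⟨hab.trans hbc, lslt_trans u v z huv hvz⟩)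

theorem lslt_asymm {u v : List X} (h1 : LSLt u v) (h2 : LSLt v u) : False :=
  lslt_irrefl u (lslt_trans u v u h1 h2)

theorem lslt_append_left_iff : ∀ (P : List X) {α β : List X},
    LSLt (P ++ α) (P ++ β) ↔ LSLt α β
  | [], _, _ => Iff.rfl
  | p :: P, α, β => by
      rw [List.cons_append, List.cons_append, lslt_cons_iff]
      simp [lt_irrefl, lslt_append_left_iff P]

/-- A "genuine" letterwise strict inequality between words. -/
inductive StrongLt : List X → List X → Prop
  | head {a b : X} (u v : List X) : a < b → StrongLt (a :: u) (b :: v)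
  | cons (a : X) {u v : List X} : StrongLt u v → StrongLt (a :: u) (a :: v)

theorem StrongLt.lslt_append {x W : List X} (h : StrongLt x W) (γ : List X) :
    LSLt (x ++ γ) W := by
  induction h with
  | head u v hab => exact lslt_cons_iff.2 (Or.inl hab)
  | cons a h ih => exact lslt_cons_iff.2 (Or.inr ⟨rfl, ih⟩)

theorem StrongLt.lslt {x W : List X} (h : StrongLt x W) : LSLt x W := by
  simpa using h.lslt_append []

theorem StrongLt.trans {x y z : List X} (h1 : StrongLt x y) (h2 : StrongLt y z) :
    StrongLt x z := by
  induction h1 generalizing z with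
  | head u v hab =>
      cases h2 with
      | head _ _ hbc => exact StrongLt.head _ _ (hab.trans hbc)
      | cons _ _ => exact StrongLt.head _ _ hab
  | cons a h ih =>
      cases h2 with
      | head _ _ hbc => exact StrongLt.head _ _ hbc
      | cons _ h' => exact StrongLt.cons a (ih h')

theorem strongLt_of_lslt_eqlen : ∀ {x y : List X}, x.length = y.length →
    LSLt x y → StrongLt x y
  | [], [], _, h => absurd h (lslt_nil_left [])
  | [], _ :: _, hl, _ => by simp at hl
  | _ :: _, [], hl, _ => by simp at hl
  | a :: u, b :: v, hl, h => by
      rcases lslt_cons_iff.1 h with hab | ⟨hab, huv⟩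
      · exact StrongLt.head _ _ hab
      · exact hab ▸ StrongLt.cons a (strongLt_of_lslt_eqlen (by simpa using hl) huv)

theorem lslt_cases : ∀ {x y : List X}, LSLt x y →
    StrongLt x y ∨ ∃ t, t ≠ [] ∧ x = y ++ t
  | [], _, h => absurd h (lslt_nil_left _)
  | a :: u, [], _ => Or.inr ⟨a :: u, List.cons_ne_nil a u, rfl⟩
  | a :: u, b :: v, h => by
      rcases lslt_cons_iff.1 h with hab | ⟨hab, huv⟩
      · exact Or.inl (StrongLt.head _ _ hab)
      · subst hab
        rcases lslt_cases huv with huv' | ⟨t, ht, heq⟩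
        · exact Or.inl (StrongLt.cons a huv')
        · exact Or.inr ⟨t, ht, by rw [heq, List.cons_append]⟩

theorem StrongLt.append_right_ext {x W : List X} (h : StrongLt x W) (δ : List X) :
    StrongLt x (W ++ δ) := by
  induction h with
  | head u v hab => exact StrongLt.head _ _ hab
  | cons a h ih => exact StrongLt.cons a ih

theorem StrongLt.append_left_arg {y z : List X} (h : StrongLt y z) (t : List X) :
    StrongLt (y ++ t) z := by
  induction h with
  | head u v hab => exact StrongLt.head _ _ hab
  | cons a h ih => exact StrongLt.cons a ih

theorem lsle_strongLt {x y z : List X} (h1 : LSLe x y) (h2 : StrongLt y z) :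
    StrongLt x z := by
  rcases h1 with rfl | h1
  · exact h2
  · rcases lslt_cases h1 with h1 | ⟨t, _, rfl⟩
    · exact h1.trans h2
    · exact h2.append_left_arg t

theorem StrongLt.prefix_restrict : ∀ {x P : List X} {Q : List X},
    StrongLt x (P ++ Q) → x.length ≤ P.length → StrongLt x P
  | [], _, _, h, _ => by cases h
  | a :: u, [], _, _, hl => by simp at hl
  | a :: u, b :: P, Q, h, hl => by
      cases h with
      | head _ _ hab => exact StrongLt.head _ _ hab
      | cons _ h' => exact StrongLt.cons _ (h'.prefix_restrict (by simpa using hl))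

theorem StrongLt.context (P : List X) {x W : List X} (h : StrongLt x W) :
    StrongLt (P ++ x) (P ++ W) := by
  induction P with
  | nil => exact h
  | cons p P ih => exact StrongLt.cons p ih

theorem strongLt_append_split : ∀ {x γ W : List X}, StrongLt (x ++ γ) W →
    StrongLt x W ∨ ∃ W', W = x ++ W' ∧ StrongLt γ W'
  | [], γ, W, h => Or.inr ⟨W, rfl, h⟩
  | a :: u, γ, W, h => by
      rw [List.cons_append] at h
      cases h with
      | head _ _ hab => exact Or.inl (StrongLt.head _ _ hab)
      | cons _ h' =>
          rcases strongLt_append_split h' with h'' | ⟨W', hW, h''⟩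
          · exact Or.inl (StrongLt.cons _ h'')
          · exact Or.inr ⟨W', by rw [hW, List.cons_append], h''⟩

theorem eqlen_lslt_append : ∀ {α β γ δ : List X}, α.length = β.length →
    LSLt (α ++ γ) (β ++ δ) → (α = β ∧ LSLt γ δ) ∨ StrongLt α β
  | [], [], _, _, _, h => Or.inl ⟨rfl, h⟩
  | [], _ :: _, _, _, hl, _ => by simp at hl
  | _ :: _, [], _, _, hl, _ => by simp at hl
  | a :: u, b :: v, γ, δ, hl, h => by
      rw [List.cons_append, List.cons_append] at h
      rcases lslt_cons_iff.1 h with hab | ⟨hab, huv⟩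
      · exact Or.inr (StrongLt.head _ _ hab)
      · subst hab
        rcases eqlen_lslt_append (by simpa using hl) huv with ⟨heq, hgd⟩ | h'
        · exact Or.inl ⟨by rw [heq], hgd⟩
        · exact Or.inr (StrongLt.cons a h')

theorem alsw_suffix_strong {u v w : List X} (hu : IsALSW u) (huvw : u = v ++ w)
    (hv : v ≠ []) (hw : w ≠ []) : StrongLt w u := by
  have h1 : LSLt (w ++ v) (v ++ w) := hu.2 v w hv hw huvw
  have hs : StrongLt (w ++ v) (v ++ w) :=
    strongLt_of_lslt_eqlen (by simp [Nat.add_comm]) h1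
  rcases strongLt_append_split hs with h | ⟨Z, hZ, hvZ⟩
  · exact huvw ▸ h
  · exfalso
    have hZlen : Z.length = v.length := by
      have := congrArg List.length hZ
      simp at this; omega
    have hZne : Z ≠ [] := by
      intro hZn; subst hZn
      simp at hZlen
      exact hv (List.length_eq_zero_iff.1 hZlen.symm)
    have h2 : LSLt (Z ++ w) (w ++ Z) := hu.2 w Z hw hZne (huvw.trans hZ)
    rw [← hZ] at h2
    rcases eqlen_lslt_append hZlen h2 with ⟨rfl, hww⟩ | hZv
    · exact lslt_irrefl w hww
    · exact lslt_asymm hvZ.lslt hZv.lslt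

end OrderLemmas
section AlgebraLemmas
variable {k X : Type*} [Field k] [LinearOrder X]

theorem StrongLt.append_append {z v γ δ : List X} (h : StrongLt z v) :
    StrongLt (z ++ γ) (v ++ δ) := by
  induction h with
  | head u v hab => exact StrongLt.head _ _ hab
  | cons a h ih => exact StrongLt.cons a ih

theorem monom_mul (u v : List X) : monom k u * monom k v = monom k (u ++ v) := by
  unfold monom
  rw [MonoidAlgebra.single_mul_single, one_mul]
  rfl

theorem monom_nil : monom k ([] : List X) = 1 := rfl

theorem wordOf_mul (t₁ t₂ : FreeMagma X) :
    wordOf (t₁ * t₂) = wordOf t₁ ++ wordOf t₂ := rfl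

theorem wordOf_ne_nil : ∀ t : FreeMagma X, wordOf t ≠ []
  | .of x => by simp [wordOf]
  | .mul a b => by
      rw [show wordOf (FreeMagma.mul a b) = wordOf a ++ wordOf b from rfl]
      simp [wordOf_ne_nil a]

theorem std_wordOf {u : List X} {t : FreeMagma X} (h : IsStdBracketing u t) :
    wordOf t = u := by
  induction h with
  | of x => rfl
  | mul _ _ _ _ ih1 ih2 => rw [wordOf_mul, ih1, ih2]

theorem std_ne_nil {u : List X} {t : FreeMagma X} (h : IsStdBracketing u t) :
    u ≠ [] := by
  intro hu
  have := std_wordOf h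
  rw [hu] at this
  exact wordOf_ne_nil t this

theorem alsw_single (x : X) : IsALSW [x] := by
  refine ⟨by simp, fun v w hv hw hvw => ?_⟩
  exfalso
  have := congrArg List.length hvw
  simp at this
  rcases v with _ | ⟨a, v⟩
  · exact hv rfl
  · rcases w with _ | ⟨b, w⟩
    · exact hw rfl
    · simp at this; omega

theorem std_alsw {u : List X} {t : FreeMagma X} (h : IsStdBracketing u t) :
    IsALSW u := by
  cases h with
  | of x => exact alsw_single x
  | mul halsw _ _ _ => exact halsw

theorem std_mul_inv {t₁ t₂ : FreeMagma X} {u : List X}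
    (h : IsStdBracketing u (t₁ * t₂)) :
    IsALSW u ∧ IsStdBracketing (wordOf t₁) t₁ ∧ IsStdBracketing (wordOf t₂) t₂ ∧
      u = wordOf t₁ ++ wordOf t₂ := by
  cases h with
  | mul halsw _ htv htw =>
      exact ⟨halsw, (std_wordOf htv) ▸ htv, (std_wordOf htw) ▸ htw,
        by rw [std_wordOf htv, std_wordOf htw]⟩

theorem subtreeAt_wordOf {s : FreeMagma X} {a d : List X} {t : FreeMagma X}
    (h : SubtreeAt s a d t) : wordOf t = a ++ wordOf s ++ d := by
  induction h with
  | refl => simp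
  | left t₂ _ ih => rw [wordOf_mul, ih]; simp [List.append_assoc]
  | right t₁ _ ih => rw [wordOf_mul, ih]; simp [List.append_assoc]

theorem std_subtree {s : FreeMagma X} {a d : List X} {t : FreeMagma X}
    (hsub : SubtreeAt s a d t) (h : IsStdBracketing (wordOf t) t) :
    IsStdBracketing (wordOf s) s := by
  induction hsub with
  | refl => exact h
  | left t₂ _ ih => exact ih (std_mul_inv h).2.1
  | right t₁ _ ih => exact ih (std_mul_inv h).2.2.1

theorem replaceAt_wordOf {s s' : FreeMagma X} {a d : List X} {t t' : FreeMagma X}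
    (h : ReplaceAt s s' a d t t') :
    wordOf t = a ++ wordOf s ++ d ∧ wordOf t' = a ++ wordOf s' ++ d := by
  induction h with
  | refl => simp
  | left t₂ _ ih => rw [wordOf_mul, wordOf_mul, ih.1, ih.2]; simp [List.append_assoc]
  | right t₁ _ ih => rw [wordOf_mul, wordOf_mul, ih.1, ih.2]; simp [List.append_assoc]

theorem evalSub_wordOf {f : FreeAssocAlg k X} {s : FreeMagma X} {a d : List X}
    {t : FreeMagma X} {h : FreeAssocAlg k X} (he : EvalSub k f s a d t h) :
    wordOf t = a ++ wordOf s ++ d := by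
  induction he with
  | refl => simp
  | left t₂ _ ih => rw [wordOf_mul, ih]; simp [List.append_assoc]
  | right t₁ _ ih => rw [wordOf_mul, ih]; simp [List.append_assoc]

/-- Span helper: multiply a span member by a constant on the left. -/
theorem mul_left_span {V : Submodule k (FreeAssocAlg k X)} {S : Set (FreeAssocAlg k X)}
    {p c : FreeAssocAlg k X} (hp : p ∈ Submodule.span k S)
    (h : ∀ x ∈ S, c * x ∈ V) : c * p ∈ V := by
  induction hp using Submodule.span_induction with
  | mem x hx => exact h x hx
  | zero => rw [mul_zero]; exact V.zero_mem
  | add x y _ _ hx hy => rw [mul_add]; exact V.add_mem hx hy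
  | smul r x _ hx => rw [mul_smul_comm]; exact V.smul_mem r hx

theorem mul_right_span {V : Submodule k (FreeAssocAlg k X)} {S : Set (FreeAssocAlg k X)}
    {p c : FreeAssocAlg k X} (hp : p ∈ Submodule.span k S)
    (h : ∀ x ∈ S, x * c ∈ V) : p * c ∈ V := by
  induction hp using Submodule.span_induction with
  | mem x hx => exact h x hx
  | zero => rw [zero_mul]; exact V.zero_mem
  | add x y _ _ hx hy => rw [add_mul]; exact V.add_mem hx hy
  | smul r x _ hx => rw [smul_mul_assoc]; exact V.smul_mem r hx

/-- Monomials strictly below `u` (same length, strictly lex-smaller). -/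
def monLowSet (k : Type*) [Field k] {X : Type*} [LinearOrder X] (u : List X) :
    Set (FreeAssocAlg k X) :=
  {p | ∃ z : List X, p = monom k z ∧ z.length = u.length ∧ StrongLt z u}

/-- The commutator evaluation of a standard bracketing has leading word `u`
with coefficient 1; all other monomials are strictly smaller. -/
theorem evalC_std {u : List X} {t : FreeMagma X} (h : IsStdBracketing u t) :
    evalC t - monom k u ∈ Submodule.span k (monLowSet k u) := by
  induction h with
  | of x =>
      have : evalC (k := k) (FreeMagma.of x) - monom k [x] = 0 := sub_self _
      rw [this]; exact Submodule.zero_mem _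
  | @mul v w tv tw halsw _ htv htw ihv ihw =>
      have hvne : v ≠ [] := std_ne_nil htv
      have hwne : w ≠ [] := std_ne_nil htw
      have hwvw : StrongLt w (v ++ w) := alsw_suffix_strong halsw rfl hvne hwne
      have hlv : wordOf tv = v := std_wordOf htv
      have hlw : wordOf tw = w := std_wordOf htw
      set rv := evalC (k := k) tv - monom k v with hrv
      set rw := evalC (k := k) tw - monom k w with hrw
      have key : evalC (k := k) (tv * tw) - monom k (v ++ w) =
          (monom k v * rw + rv * evalC tw) - (evalC tw * monom k v + evalC tw * rv) := by
        rw [show evalC (k := k) (tv * tw) =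
          evalC tv * evalC tw - evalC tw * evalC tv from rfl, ← monom_mul, hrv, hrw]
        noncomm_ring
      rw [key]
      set V := Submodule.span k (monLowSet k (v ++ w)) with hV
      have lenv : ∀ z : List X, z.length = v.length →
          (z ++ w).length = (v ++ w).length := by intro z hz; simp [hz]
      have t1 : monom k v * rw ∈ V := by
        refine mul_left_span ihw ?_
        rintro x ⟨z, rfl, hzl, hzs⟩
        rw [monom_mul]
        exact Submodule.subset_span ⟨v ++ z, rfl, by simp [hzl], hzs.context v⟩
      have hEw : ∀ y : List X, y.length = v.length → StrongLt y v →
          monom k y * evalC tw ∈ V := by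
        intro y hyl hys
        have : monom k y * evalC tw =
            monom k y * monom k w + monom k y * rw := by rw [hrw]; noncomm_ring
        rw [this]
        refine V.add_mem ?_ ?_
        · rw [monom_mul]
          exact Submodule.subset_span ⟨y ++ w, rfl, by simp [hyl], hys.append_append⟩
        · refine mul_left_span ihw ?_
          rintro x ⟨z, rfl, hzl, hzs⟩
          rw [monom_mul]
          exact Submodule.subset_span ⟨y ++ z, rfl, by simp [hyl, hzl],
            hys.append_append⟩
      have t2 : rv * evalC tw ∈ V := by
        refine mul_right_span ihv ?_
        rintro x ⟨z, rfl, hzl, hzs⟩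
        exact hEw z hzl hzs
      have t3 : evalC (k := k) tw * monom k v ∈ V := by
        have : evalC (k := k) tw * monom k v =
            monom k w * monom k v + rw * monom k v := by rw [hrw]; noncomm_ring
        rw [this]
        refine V.add_mem ?_ ?_
        · rw [monom_mul]
          exact Submodule.subset_span ⟨w ++ v, rfl, by simp [Nat.add_comm],
            hwvw.append_left_arg v⟩
        · refine mul_right_span ihw ?_
          rintro x ⟨z, rfl, hzl, hzs⟩
          rw [monom_mul]
          exact Submodule.subset_span ⟨z ++ v, rfl, by simp [hzl, Nat.add_comm],
            (hzs.trans hwvw).append_left_arg v⟩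
      have t4 : evalC (k := k) tw * rv ∈ V := by
        refine mul_left_span ihv ?_
        rintro x ⟨z, rfl, hzl, hzs⟩
        have : evalC (k := k) tw * monom k z =
            monom k w * monom k z + rw * monom k z := by rw [hrw]; noncomm_ring
        rw [this]
        refine V.add_mem ?_ ?_
        · rw [monom_mul]
          exact Submodule.subset_span ⟨w ++ z, rfl, by simp [hzl, Nat.add_comm],
            hwvw.append_left_arg z⟩
        · refine mul_right_span ihw ?_
          rintro x' ⟨y, rfl, hyl, hys⟩
          rw [monom_mul]
          exact Submodule.subset_span ⟨y ++ z, rfl, by simp [hzl, hyl, Nat.add_comm],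
            (hys.trans hwvw).append_left_arg z⟩
      exact V.sub_mem (V.add_mem t1 t2) (V.add_mem t3 t4)

end AlgebraLemmas
section MainInduction

set_option linter.unusedSectionVars false

/-- Words `u s v` strictly below `W` (same length, genuinely lex-smaller),
multiplied around `s`. -/
def lowSet (k : Type*) [Field k] {X : Type*} [LinearOrder X]
    (s : FreeAssocAlg k X) (sbar W : List X) : Set (FreeAssocAlg k X) :=
  {p | ∃ u v : List X, p = monom k u * s * monom k v ∧
    (u ++ sbar ++ v).length = W.length ∧ StrongLt (u ++ sbar ++ v) W}

/-- A certified path from a subtree with word `sbar` up through the tree,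
carrying the order facts needed at every step. -/
inductive Good {X : Type*} [LinearOrder X] (sbar : List X) :
    List X → List X → FreeMagma X → Prop
  | refl (s : FreeMagma X) : wordOf s = sbar → Good sbar [] [] s
  | left {A D : List X} {t₁ : FreeMagma X} (t₂ : FreeMagma X) :
      Good sbar A D t₁ → IsStdBracketing (wordOf t₂) t₂ →
      StrongLt (wordOf t₂) (A ++ sbar ++ D ++ wordOf t₂) →
      Good sbar A (D ++ wordOf t₂) (t₁ * t₂)
  | right {A D : List X} {t₂ : FreeMagma X} (t₁ : FreeMagma X) :
      Good sbar A D t₂ → IsStdBracketing (wordOf t₁) t₁ →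
      StrongLt (A ++ sbar ++ D) (wordOf t₁ ++ (A ++ sbar ++ D)) →
      Good sbar (wordOf t₁ ++ A) D (t₁ * t₂)

variable {k X : Type*} [Field k] [LinearOrder X]

theorem good_wordOf {sbar A D : List X} {t : FreeMagma X} (h : Good sbar A D t) :
    wordOf t = A ++ sbar ++ D := by
  induction h with
  | refl s hs => simpa using hs
  | left t₂ _ _ _ ih => rw [wordOf_mul, ih]; simp [List.append_assoc]
  | right t₁ _ _ _ ih => rw [wordOf_mul, ih]; simp [List.append_assoc]


theorem good_left_inv {sbar : List X} (hsne : sbar ≠ [])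
    {A D₀ : List X} {t₁ t₂ : FreeMagma X}
    (hgood : Good sbar A (D₀ ++ wordOf t₂) (t₁ * t₂)) :
    Good sbar A D₀ t₁ ∧ IsStdBracketing (wordOf t₂) t₂ ∧
      StrongLt (wordOf t₂) (A ++ sbar ++ D₀ ++ wordOf t₂) := by
  generalize hDk : D₀ ++ wordOf t₂ = Dk at hgood
  cases hgood with
  | refl =>
      exfalso
      have := wordOf_ne_nil t₂
      simp at hDk
      exact this hDk.2
  | left _ hg hstd =>
      rename_i D' hstrong
      have hD : D₀ = D' := List.append_cancel_right hDk
      subst hD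
      exact ⟨hg, hstd, hstrong⟩
  | right _ hg _ =>
      exfalso
      rename_i A' _
      have h4 := congrArg List.length (good_wordOf hg)
      have h5 := congrArg List.length hDk
      simp at h4 h5
      exact hsne (List.length_eq_zero_iff.1 (by omega))

theorem good_right_inv {sbar : List X} (hsne : sbar ≠ [])
    {A₀ D : List X} {t₁ t₂ : FreeMagma X}
    (hgood : Good sbar (wordOf t₁ ++ A₀) D (t₁ * t₂)) :
    Good sbar A₀ D t₂ ∧ IsStdBracketing (wordOf t₁) t₁ ∧
      StrongLt (A₀ ++ sbar ++ D) (wordOf t₁ ++ (A₀ ++ sbar ++ D)) := by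
  generalize hAk : wordOf t₁ ++ A₀ = Ak at hgood
  cases hgood with
  | refl =>
      exfalso
      have := wordOf_ne_nil t₁
      simp at hAk
      exact this hAk.1
  | left _ hg _ =>
      exfalso
      rename_i D' _
      have h4 := congrArg List.length (good_wordOf hg)
      have h5 := congrArg List.length hAk
      simp at h4 h5
      exact hsne (List.length_eq_zero_iff.1 (by omega))
  | right _ hg hstd =>
      rename_i A' hstrong
      have hA : A₀ = A' := List.append_cancel_left hAk
      subst hA
      exact ⟨hg, hstd, hstrong⟩

theorem evalSub_decomp {f : FreeAssocAlg k X} {sbar : List X} (hsne : sbar ≠ [])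
    {tv : FreeMagma X} (htv : wordOf tv = sbar) :
    ∀ {A D : List X} {t : FreeMagma X} {h : FreeAssocAlg k X},
      EvalSub k f tv A D t h → Good sbar A D t →
      h - monom k A * f * monom k D ∈
        Submodule.span k (lowSet k f sbar (A ++ sbar ++ D)) := by
  intro A D t h he
  induction he with
  | refl =>
      intro _
      have h1 : monom k ([] : List X) * f * monom k [] = f := by
        rw [monom_nil]; simp
      rw [h1, sub_self]
      exact Submodule.zero_mem _
  | left t₂ hprem =>
      rename_i A D₀ t₁ h₀ ih
      intro hgood
      obtain ⟨hg, hstd, hstrong⟩ := good_left_inv hsne hgood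
      have rmem := ih hg
      have ρmem := evalC_std (k := k) hstd
      set w₂ := wordOf t₂ with hw₂
      set N := A ++ sbar ++ D₀ with hN
      set M := A ++ sbar ++ (D₀ ++ w₂) with hM
      have hMN : M = N ++ w₂ := by rw [hM, hN]; simp [List.append_assoc]
      set V := Submodule.span k (lowSet k f sbar M) with hV
      set L := monom k A * f * monom k D₀ with hL
      set r := h₀ - L with hr
      set ρ := evalC (k := k) t₂ - monom k w₂ with hρ
      have hstrongM : StrongLt w₂ M := by
        rw [hMN]; exact hstrong
      have hNlen : ∀ u v : List X, (u ++ sbar ++ v).length = N.length →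
          u.length + v.length = A.length + D₀.length := by
        intro u v hl; rw [hN] at hl; simp at hl; omega
      have memV : ∀ u v : List X, (u ++ sbar ++ v).length = M.length →
          StrongLt (u ++ sbar ++ v) M → monom k u * f * monom k v ∈ V := by
        intro u v h1 h2
        exact Submodule.subset_span ⟨u, v, rfl, h1, h2⟩
      have a1 : L * ρ ∈ V := by
        refine mul_left_span ρmem ?_
        rintro x ⟨z, rfl, hzl, hzs⟩
        have : L * monom k z = monom k A * f * monom k (D₀ ++ z) := by
          rw [hL, mul_assoc, mul_assoc, monom_mul, ← mul_assoc]
        rw [this]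
        refine memV _ _ (by rw [hM]; simp [hzl]) ?_
        have := hzs.context (P := N)
        rw [hMN]
        simpa [hN, List.append_assoc] using this
      have a2 : r * monom k w₂ ∈ V := by
        refine mul_right_span rmem ?_
        rintro x ⟨u, v, rfl, hl, hs⟩
        have : monom k u * f * monom k v * monom k w₂ =
            monom k u * f * monom k (v ++ w₂) := by
          rw [mul_assoc, mul_assoc, monom_mul, ← mul_assoc]
        rw [this]
        refine memV _ _ (by rw [hM]; have := hNlen u v hl; simp; omega) ?_
        have := hs.append_append (γ := w₂) (δ := w₂)
        rw [hMN]
        simpa [List.append_assoc] using this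
      have a3 : r * ρ ∈ V := by
        refine mul_right_span rmem ?_
        rintro x ⟨u, v, rfl, hl, hs⟩
        refine mul_left_span ρmem ?_
        rintro y ⟨z, rfl, hzl, hzs⟩
        have : monom k u * f * monom k v * monom k z =
            monom k u * f * monom k (v ++ z) := by
          rw [mul_assoc, mul_assoc, monom_mul, ← mul_assoc]
        rw [this]
        refine memV _ _ (by rw [hM]; have := hNlen u v hl; simp only [List.length_append, hzl] <;> omega) ?_
        have := hs.append_append (γ := z) (δ := w₂)
        rw [hMN]
        simpa [List.append_assoc] using this
      have a4 : monom k w₂ * L ∈ V := by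
        have : monom k w₂ * L = monom k (w₂ ++ A) * f * monom k D₀ := by
          rw [hL, ← mul_assoc, ← mul_assoc, monom_mul]
        rw [this]
        refine memV _ _ (by rw [hM]; simp only [List.length_append] <;> omega) ?_
        have := hstrongM.append_left_arg N
        simpa [hN, List.append_assoc] using this
      have a5 : monom k w₂ * r ∈ V := by
        refine mul_left_span rmem ?_
        rintro x ⟨u, v, rfl, hl, hs⟩
        have : monom k w₂ * (monom k u * f * monom k v) =
            monom k (w₂ ++ u) * f * monom k v := by
          rw [← mul_assoc, ← mul_assoc, monom_mul]
        rw [this]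
        refine memV _ _ (by have := hNlen u v hl; rw [hM]; simp only [List.length_append] <;> omega) ?_
        have := hstrongM.append_left_arg (u ++ sbar ++ v)
        simpa [List.append_assoc] using this
      have a6 : ρ * L ∈ V := by
        refine mul_right_span ρmem ?_
        rintro x ⟨z, rfl, hzl, hzs⟩
        have : monom k z * L = monom k (z ++ A) * f * monom k D₀ := by
          rw [hL, ← mul_assoc, ← mul_assoc, monom_mul]
        rw [this]
        refine memV _ _ (by rw [hM]; simp only [List.length_append, hzl] <;> omega) ?_
        have := (hzs.trans hstrongM).append_left_arg N
        simpa [hN, List.append_assoc] using this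
      have a7 : ρ * r ∈ V := by
        refine mul_right_span ρmem ?_
        rintro x ⟨z, rfl, hzl, hzs⟩
        refine mul_left_span rmem ?_
        rintro y ⟨u, v, rfl, hl, hs⟩
        have : monom k z * (monom k u * f * monom k v) =
            monom k (z ++ u) * f * monom k v := by
          rw [← mul_assoc, ← mul_assoc, monom_mul]
        rw [this]
        refine memV _ _ (by have := hNlen u v hl; rw [hM]; simp only [List.length_append, hzl] <;> omega) ?_
        have := (hzs.trans hstrongM).append_left_arg (u ++ sbar ++ v)
        simpa [List.append_assoc] using this
      have hexp : (h₀ * evalC t₂ - evalC t₂ * h₀) -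
          monom k A * f * monom k (D₀ ++ w₂) =
          (L * ρ + r * monom k w₂ + r * ρ) -
            (monom k w₂ * L + monom k w₂ * r + (ρ * L + ρ * r)) := by
        have hDm : monom k (D₀ ++ w₂) = monom k D₀ * monom k w₂ :=
          (monom_mul _ _).symm
        rw [hDm, hr, hρ, hL]
        noncomm_ring
      rw [hexp]
      exact V.sub_mem (V.add_mem (V.add_mem a1 a2) a3)
        (V.add_mem (V.add_mem a4 a5) (V.add_mem a6 a7))
  | right t₁ hprem =>
      rename_i A₀ D t₂ h₀ ih
      intro hgood
      obtain ⟨hg, hstd, hstrong⟩ := good_right_inv hsne hgood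
      have rmem := ih hg
      have ρmem := evalC_std (k := k) hstd
      set w₁ := wordOf t₁ with hw₁
      set N := A₀ ++ sbar ++ D with hN
      set M := w₁ ++ A₀ ++ sbar ++ D with hM
      have hMN : M = w₁ ++ N := by rw [hM, hN]; simp [List.append_assoc]
      set V := Submodule.span k (lowSet k f sbar M) with hV
      set L := monom k A₀ * f * monom k D with hL
      set r := h₀ - L with hr
      set ρ := evalC (k := k) t₁ - monom k w₁ with hρ
      have hstrongM : StrongLt N M := by
        rw [hMN]; simpa [hN, List.append_assoc] using hstrong
      have hNlen : ∀ u v : List X, (u ++ sbar ++ v).length = N.length →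
          u.length + v.length = A₀.length + D.length := by
        intro u v hl; rw [hN] at hl; simp at hl; omega
      have memV : ∀ u v : List X, (u ++ sbar ++ v).length = M.length →
          StrongLt (u ++ sbar ++ v) M → monom k u * f * monom k v ∈ V := by
        intro u v h1 h2
        exact Submodule.subset_span ⟨u, v, rfl, h1, h2⟩
      have a1 : monom k w₁ * r ∈ V := by
        refine mul_left_span rmem ?_
        rintro x ⟨u, v, rfl, hl, hs⟩
        have : monom k w₁ * (monom k u * f * monom k v) =
            monom k (w₁ ++ u) * f * monom k v := by
          rw [← mul_assoc, ← mul_assoc, monom_mul]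
        rw [this]
        refine memV _ _ (by have := hNlen u v hl; rw [hM]; simp only [List.length_append] <;> omega) ?_
        rw [hMN]
        have := hs.context (P := w₁)
        -- StrongLt (w₁ ++ (u ++ sbar ++ v)) (w₁ ++ N)
        simpa [List.append_assoc] using this
      have a2 : ρ * L ∈ V := by
        refine mul_right_span ρmem ?_
        rintro x ⟨z, rfl, hzl, hzs⟩
        have : monom k z * L = monom k (z ++ A₀) * f * monom k D := by
          rw [hL, ← mul_assoc, ← mul_assoc, monom_mul]
        rw [this]
        refine memV _ _ (by rw [hM]; simp only [List.length_append, hzl] <;> omega) ?_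
        have := (hzs.append_append (γ := A₀ ++ sbar ++ D) (δ := A₀ ++ sbar ++ D))
        rw [hM]
        simpa [List.append_assoc] using this
      have a3 : ρ * r ∈ V := by
        refine mul_right_span ρmem ?_
        rintro x ⟨z, rfl, hzl, hzs⟩
        refine mul_left_span rmem ?_
        rintro y ⟨u, v, rfl, hl, hs⟩
        have : monom k z * (monom k u * f * monom k v) =
            monom k (z ++ u) * f * monom k v := by
          rw [← mul_assoc, ← mul_assoc, monom_mul]
        rw [this]
        refine memV _ _ (by have := hNlen u v hl; rw [hM]; simp only [List.length_append, hzl] <;> omega) ?_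
        have := (hzs.append_append (γ := u ++ sbar ++ v) (δ := A₀ ++ sbar ++ D))
        rw [hM]
        simpa [List.append_assoc] using this
      have a4 : L * monom k w₁ ∈ V := by
        have : L * monom k w₁ = monom k A₀ * f * monom k (D ++ w₁) := by
          rw [hL, mul_assoc, mul_assoc, monom_mul, ← mul_assoc]
        rw [this]
        refine memV _ _ (by rw [hM]; simp only [List.length_append] <;> omega) ?_
        have h5 := hstrongM.append_left_arg w₁
        -- StrongLt (N ++ w₁) M
        simpa [hN, List.append_assoc] using h5
      have a5 : L * ρ ∈ V := by
        refine mul_left_span ρmem ?_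
        rintro x ⟨z, rfl, hzl, hzs⟩
        have : L * monom k z = monom k A₀ * f * monom k (D ++ z) := by
          rw [hL, mul_assoc, mul_assoc, monom_mul, ← mul_assoc]
        rw [this]
        refine memV _ _ (by rw [hM]; simp only [List.length_append, hzl] <;> omega) ?_
        have h5 := hstrongM.append_left_arg z
        simpa [hN, List.append_assoc] using h5
      have a6 : r * monom k w₁ ∈ V := by
        refine mul_right_span rmem ?_
        rintro x ⟨u, v, rfl, hl, hs⟩
        have : monom k u * f * monom k v * monom k w₁ =
            monom k u * f * monom k (v ++ w₁) := by
          rw [mul_assoc, mul_assoc, monom_mul, ← mul_assoc]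
        rw [this]
        refine memV _ _ (by have := hNlen u v hl; rw [hM]; simp only [List.length_append] <;> omega) ?_
        have h5 := (hs.trans hstrongM).append_left_arg w₁
        simpa [List.append_assoc] using h5
      have a7 : r * ρ ∈ V := by
        refine mul_right_span rmem ?_
        rintro x ⟨u, v, rfl, hl, hs⟩
        refine mul_left_span ρmem ?_
        rintro y ⟨z, rfl, hzl, hzs⟩
        have : monom k u * f * monom k v * monom k z =
            monom k u * f * monom k (v ++ z) := by
          rw [mul_assoc, mul_assoc, monom_mul, ← mul_assoc]
        rw [this]
        refine memV _ _ (by have := hNlen u v hl; rw [hM]; simp only [List.length_append, hzl] <;> omega) ?_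
        have h5 := (hs.trans hstrongM).append_left_arg z
        simpa [List.append_assoc] using h5
      have hexp : (evalC t₁ * h₀ - h₀ * evalC t₁) -
          monom k (w₁ ++ A₀) * f * monom k D =
          (monom k w₁ * r + (ρ * L + ρ * r)) -
            (L * monom k w₁ + L * ρ + (r * monom k w₁ + r * ρ)) := by
        have hAm : monom k (w₁ ++ A₀) = monom k w₁ * monom k A₀ :=
          (monom_mul _ _).symm
        rw [hAm, hr, hρ, hL]
        noncomm_ring
      rw [hexp]
      exact V.sub_mem (V.add_mem a1 (V.add_mem a2 a3))
        (V.add_mem (V.add_mem a4 a5) (V.add_mem a6 a7))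

end MainInduction
section Assembly
set_option linter.unusedSectionVars false
variable {k X : Type*} [Field k] [LinearOrder X]

theorem factor_strong : ∀ (cs : List (List X)), (∀ w ∈ cs, IsALSW w) →
    List.Chain' LSLe cs → ∀ Y Q : List X, Q ≠ [] → Y = Q ++ cs.flatten →
    IsALSW Y → ∀ e ∈ cs, StrongLt e Y := by
  intro cs
  induction cs with
  | nil => intro _ _ _ _ _ _ _ e he; simp at he
  | cons c₀ rest ih =>
      intro halsw hchain Y Q hQ hYQ hY e he
      rcases List.mem_cons.1 he with rfl | he'
      · cases rest with
        | nil =>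
            refine alsw_suffix_strong hY (by simpa using hYQ) hQ (halsw e (by simp)).1
        | cons c₁ rest' =>
            have h1 : LSLe e c₁ := (List.isChain_cons_cons.1 hchain).1
            have h2 : StrongLt c₁ Y := by
              refine ih (fun x hx => halsw x (by simp [hx])) (List.IsChain.tail hchain)
                Y (Q ++ e) (by simp [hQ]) (by rw [hYQ]; simp [List.append_assoc]) hY
                c₁ (by simp)
            exact lsle_strongLt h1 h2
      · exact ih (fun x hx => halsw x (by simp [hx])) (List.IsChain.tail hchain)
          Y (Q ++ c₀) (by simp [hQ]) (by rw [hYQ]; simp [List.append_assoc]) hY e he'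

theorem spine {sbar Y : List X} :
    ∀ {cs : List (List X)} {tcs : List (FreeMagma X)}, List.Forall₂ IsStdBracketing cs tcs →
      (∀ e ∈ cs, StrongLt e Y) →
      ∀ {D₀ : List X} {t₀ : FreeMagma X}, Good sbar [] D₀ t₀ →
      sbar ++ (D₀ ++ cs.flatten) = Y →
      Good sbar [] (D₀ ++ cs.flatten) (leftComb t₀ tcs) := by
  intro cs tcs hf
  induction hf with
  | nil => intro _ D₀ t₀ hg _; simpa [leftComb] using hg
  | @cons c₀ tc₀ cs' tcs' hstd htail ih =>
      intro hstrongs D₀ t₀ hg hY'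
      have hc₀w : wordOf tc₀ = c₀ := std_wordOf hstd
      have hYeq : Y = (sbar ++ D₀ ++ c₀) ++ cs'.flatten := by
        rw [← hY']; simp [List.append_assoc]
      have h1 : StrongLt c₀ ([] ++ sbar ++ D₀ ++ c₀) := by
        have h0 := hstrongs c₀ (by simp)
        rw [hYeq] at h0
        have h2 := h0.prefix_restrict (by simp only [List.length_append]; omega)
        simpa [List.append_assoc] using h2
      have hstep : Good sbar [] (D₀ ++ c₀) (t₀ * tc₀) := by
        have := Good.left tc₀ hg (by rw [hc₀w]; exact hstd) (by rw [hc₀w]; exact h1)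
        rwa [hc₀w] at this
      have hrec := ih (fun e he => hstrongs e (by simp [he])) hstep
        (by rw [← hY']; simp [List.append_assoc])
      simpa [leftComb, List.append_assoc] using hrec

theorem climb {sbar c : List X} {s s' : FreeMagma X}
    (hws : wordOf s = sbar ++ c) (hws' : wordOf s' = sbar ++ c) :
    ∀ {A D : List X} {t t' : FreeMagma X}, ReplaceAt s s' A D t t' →
      IsStdBracketing (wordOf t) t → Good sbar [] c s' →
      Good sbar A (c ++ D) t' := by
  intro A D t t' hrep
  induction hrep with
  | refl => intro _ hgs'; simpa using hgs'
  | left t₂ hprem =>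
      rename_i A D₀ t₁ t₁' ih
      intro hstd hgs'
      obtain ⟨halsw, hstd₁, hstd₂, _⟩ := std_mul_inv hstd
      have ihg := ih hstd₁ hgs'
      have hword₁ : wordOf t₁ = A ++ (sbar ++ c) ++ D₀ := by
        have := (replaceAt_wordOf hprem).1
        rw [hws] at this; exact this
      have hstr : StrongLt (wordOf t₂) (A ++ sbar ++ (c ++ D₀) ++ wordOf t₂) := by
        have h2 := alsw_suffix_strong halsw (wordOf_mul t₁ t₂)
          (wordOf_ne_nil t₁) (wordOf_ne_nil t₂)
        rw [wordOf_mul, hword₁] at h2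
        simpa [List.append_assoc] using h2
      have := Good.left t₂ ihg hstd₂ hstr
      simpa [List.append_assoc] using this
  | right t₁ hprem =>
      rename_i A₀ D t₂ t₂' ih
      intro hstd hgs'
      obtain ⟨halsw, hstd₁, hstd₂, _⟩ := std_mul_inv hstd
      have ihg := ih hstd₂ hgs'
      have hword₂ : wordOf t₂ = A₀ ++ (sbar ++ c) ++ D := by
        have := (replaceAt_wordOf hprem).1
        rw [hws] at this; exact this
      have hstr : StrongLt (A₀ ++ sbar ++ (c ++ D))
          (wordOf t₁ ++ (A₀ ++ sbar ++ (c ++ D))) := by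
        have h2 := alsw_suffix_strong halsw (wordOf_mul t₁ t₂)
          (wordOf_ne_nil t₁) (wordOf_ne_nil t₂)
        rw [wordOf_mul, hword₂] at h2
        simpa [List.append_assoc] using h2
      exact Good.right t₁ ihg hstd₁ hstr

theorem normalSWord_decomp {f : FreeAssocAlg k X} {sbar A B : List X}
    {h : FreeAssocAlg k X} (hns : IsNormalSWord f sbar A B h) :
    h - monom k A * f * monom k B ∈
      Submodule.span k (lowSet k f sbar (A ++ sbar ++ B)) := by
  obtain ⟨c, d, t, s, tv, t', cs, tcs, hb, hstdt, hsub, hwords, hstdv,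
    ⟨hcjoin, hcsalsw, hchain⟩, hfa, hrep, hev⟩ := hns
  subst hb
  have htvw : wordOf tv = sbar := std_wordOf hstdv
  have hsne : sbar ≠ [] := std_ne_nil hstdv
  have hwt : wordOf t = A ++ sbar ++ (c ++ d) := std_wordOf hstdt
  have hstdt' : IsStdBracketing (wordOf t) t := by rw [hwt]; exact hstdt
  have hstds : IsStdBracketing (wordOf s) s := std_subtree hsub hstdt'
  have hY : IsALSW (sbar ++ c) := by
    have := std_alsw hstds; rwa [hwords] at this
  have hfacts : ∀ e ∈ cs, StrongLt e (sbar ++ c) :=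
    factor_strong cs hcsalsw hchain (sbar ++ c) sbar hsne (by rw [hcjoin]) hY
  have hgood0 : Good sbar [] ([] ++ cs.flatten) (leftComb tv tcs) :=
    spine hfa hfacts (Good.refl tv htvw) (by simp [← hcjoin])
  have hgoodc : Good sbar [] c (leftComb tv tcs) := by
    rw [hcjoin]; simpa using hgood0
  have hws' : wordOf (leftComb tv tcs) = sbar ++ c := by
    simpa using good_wordOf hgoodc
  have hgood : Good sbar A (c ++ d) t' := climb hwords hws' hrep hstdt' hgoodc
  exact evalSub_decomp hsne htvw hev hgood

theorem trivialModAss_neg {S : Set (FreeAssocAlg k X)} {w : List X}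
    {p : FreeAssocAlg k X} (hp : TrivialModAss S w p) : TrivialModAss S w (-p) := by
  obtain ⟨n, α, s, a, b, sb, hcond, hsum⟩ := hp
  refine ⟨n, fun i => -α i, s, a, b, sb, hcond, ?_⟩
  rw [hsum, ← Finset.sum_neg_distrib]
  exact Finset.sum_congr rfl fun i _ => (neg_smul _ _).symm

theorem trivialModAss_add {S : Set (FreeAssocAlg k X)} {w : List X}
    {p q : FreeAssocAlg k X} (hp : TrivialModAss S w p) (hq : TrivialModAss S w q) :
    TrivialModAss S w (p + q) := by
  obtain ⟨n1, α1, s1, a1, b1, sb1, h1, hp1⟩ := hp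
  obtain ⟨n2, α2, s2, a2, b2, sb2, h2, hp2⟩ := hq
  refine ⟨n1 + n2, Fin.addCases α1 α2, Fin.addCases s1 s2, Fin.addCases a1 a2,
    Fin.addCases b1 b2, Fin.addCases sb1 sb2, ?_, ?_⟩
  · intro i
    induction i using Fin.addCases with
    | left j => simpa [Fin.addCases_left] using h1 j
    | right j => simpa [Fin.addCases_right] using h2 j
  · rw [hp1, hp2, Fin.sum_univ_add]
    congr 1
    · exact Finset.sum_congr rfl fun i _ => by simp [Fin.addCases_left]
    · exact Finset.sum_congr rfl fun i _ => by simp [Fin.addCases_right]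

theorem span_lowSet_trivial {s₀ : FreeAssocAlg k X} {sbar w : List X}
    {S : Set (FreeAssocAlg k X)} (hs₀ : s₀ ∈ S) (hlead : IsLeadingWord s₀ sbar)
    {p : FreeAssocAlg k X} (hp : p ∈ Submodule.span k (lowSet k s₀ sbar w)) :
    TrivialModAss S w p := by
  rw [Submodule.mem_span_set'] at hp
  obtain ⟨n, αf, g, hsum⟩ := hp
  have huv : ∀ i : Fin n, ∃ u v : List X,
      (g i : FreeAssocAlg k X) = monom k u * s₀ * monom k v ∧
      (u ++ sbar ++ v).length = w.length ∧ StrongLt (u ++ sbar ++ v) w :=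
    fun i => (g i).2
  choose u v heq hlen hstr using huv
  refine ⟨n, αf, fun _ => s₀, u, v, fun _ => sbar,
    fun i => ⟨hs₀, hlead, Or.inr ⟨hlen i, (hstr i).lslt⟩⟩, ?_⟩
  rw [← hsum]
  exact Finset.sum_congr rfl fun i _ => by rw [heq i]

end Assembly

/-- For monic Lie polynomials `f, g`, the difference between
the Lie composition `⟨f,g⟩_w` and the associative composition `(f,g)_w` (of the
same shape) is trivial modulo `({f,g}, w)` in the associative sense. -/
theorem lie_comp_sub_ass_comp_trivial {k X : Type*} [Field k] [LinearOrder X]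
    (f g : FreeAssocAlg k X) (hf : f ∈ LieX k X) (hg : g ∈ LieX k X)
    (hfm : IsMonic f) (hgm : IsMonic g)
    (fbar gbar w : List X)
    (hlf : IsLeadingWord f fbar) (hlg : IsLeadingWord g gbar)
    (sh : CompShape X) (p q : FreeAssocAlg k X)
    (hp : IsLieComp f g fbar gbar w sh p)
    (hq : IsAssComp f g fbar gbar w sh q) :
    TrivialModAss {f, g} w (p - q) := by
  cases sh with
  | incl a b =>
      obtain ⟨hwf, hwab, h, hns, hpe⟩ := hp
      obtain ⟨_, _, hqe⟩ := hq
      have hd := normalSWord_decomp hns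
      rw [← hwab] at hd
      have hpq : p - q = -(h - monom k a * g * monom k b) := by
        rw [hpe, hqe]; abel
      rw [hpq]
      exact trivialModAss_neg (span_lowSet_trivial (by simp) hlg hd)
  | inter a b =>
      obtain ⟨hwfb, hwag, hlen, h₁, h₂, hns₁, hns₂, hpe⟩ := hp
      obtain ⟨_, _, _, hqe⟩ := hq
      have hd₁ := normalSWord_decomp hns₁
      have hd₂ := normalSWord_decomp hns₂
      simp only [monom_nil, one_mul, mul_one, List.nil_append, List.append_nil]
        at hd₁ hd₂
      rw [← hwfb] at hd₁
      rw [← hwag] at hd₂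
      have hpq : p - q = (h₁ - f * monom k b) + -(h₂ - monom k a * g) := by
        rw [hpe, hqe]; abel
      rw [hpq]
      exact trivialModAss_add (span_lowSet_trivial (by simp) hlf hd₁)
        (trivialModAss_neg (span_lowSet_trivial (by simp) hlg hd₂))
end

section
/- For a nonempty set S of monic polynomials in k⟨X⟩ and a monomial well-order on X*, S is a Gröbner-Shirshov basis if and only if every nonzero f in the two-sided ideal Id(S) has leading word of the form a s̄ b for some s ∈ S and a, b ∈ X*; and either condition is equivalent to the set of S-irreducible words {u ∈ X* : u ≠ a s̄ b for all s ∈ S, a,b ∈ X*} being a k-basis of k⟨X⟩/Id(S). -/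
open List

attribute [local instance 100] LieRing.ofAssociativeRing

/-- `u` is the leading word of `f` with respect to the order `r`. -/
def IsLeadingWordR {k X : Type*} [Field k] (r : List X → List X → Prop)
    (f : FreeAssocAlg k X) (u : List X) : Prop :=
  coeffW f u ≠ 0 ∧ ∀ w : List X, coeffW f w ≠ 0 → w = u ∨ r w u

/-- `p` is trivial modulo `(S, w)` with respect to the order `r`. -/
def TrivialModAssR {k X : Type*} [Field k] (r : List X → List X → Prop)
    (S : Set (FreeAssocAlg k X)) (w : List X) (p : FreeAssocAlg k X) : Prop :=
  ∃ (n : ℕ) (α : Fin n → k) (s : Fin n → FreeAssocAlg k X) (a b sb : Fin n → List X),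
    (∀ i, s i ∈ S ∧ IsLeadingWordR r (s i) (sb i) ∧ r (a i ++ sb i ++ b i) w) ∧
    p = ∑ i, α i • (monom k (a i) * s i * monom k (b i))

/-- `S` is a Gröbner–Shirshov basis in `k⟨X⟩` with respect to the order `r`. -/
def IsGSBAssR {k X : Type*} [Field k] (r : List X → List X → Prop)
    (S : Set (FreeAssocAlg k X)) : Prop :=
  ∀ (f g : FreeAssocAlg k X) (fbar gbar w : List X) (sh : CompShape X)
    (p : FreeAssocAlg k X), f ∈ S → g ∈ S →
    IsLeadingWordR r f fbar → IsLeadingWordR r g gbar →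
    IsAssComp f g fbar gbar w sh p → TrivialModAssR r S w p


namespace CD

open Finset MonoidAlgebra

variable {k X : Type*} [Field k] {r : List X → List X → Prop} {S : Set (FreeAssocAlg k X)}

theorem r_irrefl (hwf : WellFounded r) (u : List X) : ¬ r u u := fun h =>
  hwf.asymmetric u u h h

theorem r_asymm (hwf : WellFounded r) {u v : List X} (h : r u v) : ¬ r v u :=
  hwf.asymmetric u v h

/-- non-strict version -/
def rle (r : List X → List X → Prop) (u v : List X) : Prop := u = v ∨ r u v

theorem rle_trans (htrans : Transitive r) {u v w : List X} (h1 : rle r u v) (h2 : rle r v w) :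
    rle r u w := by
  rcases h1 with rfl | h1
  · exact h2
  · rcases h2 with rfl | h2
    · exact Or.inr h1
    · exact Or.inr (htrans h1 h2)

theorem rle_of_rle_of_r (htrans : Transitive r) {u v w : List X} (h1 : rle r u v) (h2 : r v w) :
    r u w := by
  rcases h1 with rfl | h1
  · exact h2
  · exact htrans h1 h2

/-! ### coefficient lemmas -/

theorem coeffW_apply (f : FreeAssocAlg k X) (u : List X) : coeffW f u = f.coeff (FreeMonoid.ofList u) :=
  rfl

@[simp] theorem coeffW_zero (u : List X) : coeffW (0 : FreeAssocAlg k X) u = 0 := rfl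

theorem coeffW_add (f g : FreeAssocAlg k X) (u : List X) :
    coeffW (f + g) u = coeffW f u + coeffW g u := rfl

theorem coeffW_sub (f g : FreeAssocAlg k X) (u : List X) :
    coeffW (f - g) u = coeffW f u - coeffW g u :=
  Finsupp.sub_apply f.coeff g.coeff _

theorem coeffW_smul (c : k) (f : FreeAssocAlg k X) (u : List X) :
    coeffW (c • f) u = c * coeffW f u := rfl

theorem coeffW_sum {ι : Type*} (s : Finset ι) (g : ι → FreeAssocAlg k X) (u : List X) :
    coeffW (∑ i ∈ s, g i) u = ∑ i ∈ s, coeffW (g i) u := by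
  rw [coeffW, MonoidAlgebra.coeff_sum]
  exact Finsupp.finset_sum_apply s (fun i => (g i).coeff) _

theorem coeffW_monom (u v : List X) [Decidable (u = v)] :
    coeffW (monom k u) v = if u = v then 1 else 0 := by
  have : Decidable (FreeMonoid.ofList u = FreeMonoid.ofList v) :=
    decidable_of_iff (u = v) (Equiv.apply_eq_iff_eq _).symm
  rw [coeffW_apply, monom, MonoidAlgebra.single_apply]
  simp [Equiv.apply_eq_iff_eq]

theorem coeffW_monom_self (u : List X) : coeffW (monom k u) u = 1 := by
  classical simp [coeffW_monom]

theorem coeffW_monom_ne {u v : List X} (h : u ≠ v) : coeffW (monom k u) v = 0 := by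
  classical simp [coeffW_monom, h]

theorem eq_of_coeffW_monom_ne_zero {u v : List X} (h : coeffW (monom k u) v ≠ 0) : v = u := by
  by_contra hc
  exact h (coeffW_monom_ne (Ne.symm hc))

theorem ext_coeffW {f g : FreeAssocAlg k X} (h : ∀ u, coeffW f u = coeffW g u) : f = g :=
  MonoidAlgebra.coeff_injective (Finsupp.ext fun m => h (FreeMonoid.toList m))

theorem eq_zero_of_coeffW {f : FreeAssocAlg k X} (h : ∀ u, coeffW f u = 0) : f = 0 :=
  ext_coeffW fun u => by simpa using h u

theorem exists_coeffW_ne_zero {f : FreeAssocAlg k X} (h : f ≠ 0) :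
    ∃ u, coeffW f u ≠ 0 := by
  by_contra hc
  push_neg at hc
  exact h (eq_zero_of_coeffW hc)

theorem monom_mul_monom (a b : List X) : monom k a * monom k b = monom k (a ++ b) := by
  simp [monom, MonoidAlgebra.single_mul_single, FreeMonoid.ofList_append]

theorem monom_nil : monom (k := k) (X := X) [] = 1 := by
  rfl

/-! ### sandwich coefficients -/

theorem coeffW_monom_mul (a : List X) (f : FreeAssocAlg k X) (u : List X) :
    coeffW (monom k a * f) (a ++ u) = coeffW f u := by
  have := MonoidAlgebra.coeff_single_mul_eq_mul_coeff (x := f)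
    (r := (1 : k)) (m := FreeMonoid.ofList a) (m₁ := FreeMonoid.ofList (a ++ u))
    (FreeMonoid.ofList u) ?_
  · simpa [coeffW_apply, monom] using this
  · intro c _
    rw [FreeMonoid.ofList_append]
    exact mul_right_inj _

theorem coeffW_monom_mul_eq_zero {a v : List X} (f : FreeAssocAlg k X)
    (h : ¬ ∃ u, v = a ++ u) : coeffW (monom k a * f) v = 0 := by
  rw [coeffW_apply, monom]
  refine MonoidAlgebra.single_mul_apply_of_not_exists_mul _ _ ?_
  rintro ⟨d, hd⟩
  exact h ⟨FreeMonoid.toList d, hd⟩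

theorem coeffW_mul_monom (b : List X) (f : FreeAssocAlg k X) (u : List X) :
    coeffW (f * monom k b) (u ++ b) = coeffW f u := by
  have := MonoidAlgebra.coeff_mul_single_eq_coeff_mul (x := f)
    (r := (1 : k)) (m := FreeMonoid.ofList b) (m₁ := FreeMonoid.ofList (u ++ b))
    (FreeMonoid.ofList u) ?_
  · simpa [coeffW_apply, monom] using this
  · intro c _
    rw [FreeMonoid.ofList_append]
    exact mul_left_inj _

theorem coeffW_mul_monom_eq_zero {b v : List X} (f : FreeAssocAlg k X)
    (h : ¬ ∃ u, v = u ++ b) : coeffW (f * monom k b) v = 0 := by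
  rw [coeffW_apply, monom]
  refine MonoidAlgebra.mul_single_apply_of_not_exists_mul _ _ ?_
  rintro ⟨d, hd⟩
  exact h ⟨FreeMonoid.toList d, hd⟩

theorem coeffW_sandwich (a b : List X) (f : FreeAssocAlg k X) (u : List X) :
    coeffW (monom k a * f * monom k b) (a ++ u ++ b) = coeffW f u := by
  rw [mul_assoc, List.append_assoc, coeffW_monom_mul, coeffW_mul_monom]

theorem coeffW_sandwich_ne_zero {a b v : List X} {f : FreeAssocAlg k X}
    (h : coeffW (monom k a * f * monom k b) v ≠ 0) :
    ∃ u, v = a ++ u ++ b ∧ coeffW f u ≠ 0 := by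
  rw [mul_assoc] at h
  by_cases h1 : ∃ t, v = a ++ t
  · obtain ⟨t, rfl⟩ := h1
    rw [coeffW_monom_mul] at h
    by_cases h2 : ∃ u, t = u ++ b
    · obtain ⟨u, rfl⟩ := h2
      rw [coeffW_mul_monom] at h
      exact ⟨u, by rw [List.append_assoc], h⟩
    · exact absurd (coeffW_mul_monom_eq_zero f h2) h
  · exact absurd (coeffW_monom_mul_eq_zero _ h1) h

/-! ### leading words -/

theorem lw_unique (hwf : WellFounded r) {f : FreeAssocAlg k X} {u v : List X}
    (hu : IsLeadingWordR r f u) (hv : IsLeadingWordR r f v) : u = v := by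
  rcases hv.2 u hu.1 with h | h
  · exact h
  · rcases hu.2 v hv.1 with h' | h'
    · exact h'.symm
    · exact absurd h' (r_asymm hwf h)

theorem finset_max (htrans : Transitive r) (htri : ∀ u v : List X, r u v ∨ u = v ∨ r v u)
    (t : Finset (List X)) (ht : t.Nonempty) :
    ∃ u ∈ t, ∀ v ∈ t, v = u ∨ r v u := by
  classical
  induction t using Finset.induction with
  | empty => exact absurd ht (by simp)
  | @insert a t' ha ih =>
    rcases t'.eq_empty_or_nonempty with rfl | ht'
    · exact ⟨a, by simp, by simp⟩
    · obtain ⟨u, hu, hmax⟩ := ih ht'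
      rcases htri a u with h | h | h
      · refine ⟨u, Finset.mem_insert_of_mem hu, ?_⟩
        intro v hv
        rcases Finset.mem_insert.1 hv with rfl | hv
        · exact Or.inr h
        · exact hmax v hv
      · refine ⟨u, Finset.mem_insert_of_mem hu, ?_⟩
        intro v hv
        rcases Finset.mem_insert.1 hv with rfl | hv
        · exact Or.inl h
        · exact hmax v hv
      · refine ⟨a, Finset.mem_insert_self a t', ?_⟩
        intro v hv
        rcases Finset.mem_insert.1 hv with rfl | hv
        · exact Or.inl rfl
        · rcases hmax v hv with rfl | hvu
          · exact Or.inr h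
          · exact Or.inr (htrans hvu h)

theorem exists_lw (htrans : Transitive r) (htri : ∀ u v : List X, r u v ∨ u = v ∨ r v u)
    {f : FreeAssocAlg k X} (hf : f ≠ 0) : ∃ u, IsLeadingWordR r f u := by
  classical
  have hs : f.coeff.support.Nonempty := Finsupp.support_nonempty_iff.2 (mt MonoidAlgebra.coeff_eq_zero.1 hf)
  have hs' : (f.coeff.support.image FreeMonoid.toList).Nonempty := hs.image _
  obtain ⟨u, hu, hmax⟩ := finset_max htrans htri _ hs'
  refine ⟨u, ?_, ?_⟩
  · obtain ⟨m, hm, rfl⟩ := Finset.mem_image.1 hu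
    exact Finsupp.mem_support_iff.1 hm
  · intro v hv
    refine hmax v (Finset.mem_image.2 ⟨FreeMonoid.ofList v, Finsupp.mem_support_iff.2 hv, rfl⟩)

theorem lw_coeff_bound (htrans : Transitive r) {f : FreeAssocAlg k X} {u : List X}
    (hu : IsLeadingWordR r f u) {v : List X} (hv : coeffW f v ≠ 0) : rle r v u :=
  hu.2 v hv

theorem lw_sandwich (hmono : ∀ u v a b : List X, r u v → r (a ++ u ++ b) (a ++ v ++ b))
    {f : FreeAssocAlg k X} {u : List X} (hu : IsLeadingWordR r f u) (a b : List X) :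
    IsLeadingWordR r (monom k a * f * monom k b) (a ++ u ++ b) := by
  constructor
  · rw [coeffW_sandwich]; exact hu.1
  · intro v hv
    obtain ⟨t, rfl, ht⟩ := coeffW_sandwich_ne_zero hv
    rcases hu.2 t ht with rfl | h
    · exact Or.inl rfl
    · exact Or.inr (hmono _ _ _ _ h)

theorem lw_monic (hwf : WellFounded r)
    (hmonic : ∀ s ∈ S, ∃ u : List X, IsLeadingWordR r s u ∧ coeffW s u = 1)
    {s : FreeAssocAlg k X} (hs : s ∈ S) {sb : List X} (hsb : IsLeadingWordR r s sb) :
    coeffW s sb = 1 := by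
  obtain ⟨u, hu, h1⟩ := hmonic s hs
  rwa [lw_unique hwf hsb hu]

theorem coeff_sub_lead (hwf : WellFounded r) {s : FreeAssocAlg k X} {sb : List X}
    (hs : IsLeadingWordR r s sb) (h1 : coeffW s sb = 1) {t : List X}
    (ht : coeffW (s - monom k sb) t ≠ 0) : r t sb := by
  rw [coeffW_sub] at ht
  by_cases hts : t = sb
  · subst hts
    rw [h1, coeffW_monom_self] at ht
    simp at ht
  · rw [coeffW_monom_ne (Ne.symm hts), sub_zero] at ht
    rcases hs.2 t ht with h | h
    · exact absurd h hts
    · exact h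

/-! ### representations bounded by a predicate -/

def RepB (r : List X → List X → Prop) (S : Set (FreeAssocAlg k X)) (P : List X → Prop)
    (p : FreeAssocAlg k X) : Prop :=
  ∃ (n : ℕ) (α : Fin n → k) (s : Fin n → FreeAssocAlg k X) (a b sb : Fin n → List X),
    (∀ i, s i ∈ S ∧ IsLeadingWordR r (s i) (sb i) ∧ P (a i ++ sb i ++ b i)) ∧
    p = ∑ i, α i • (monom k (a i) * s i * monom k (b i))

theorem trivialModAssR_iff_repB {w : List X} {p : FreeAssocAlg k X} :
    TrivialModAssR r S w p ↔ RepB r S (fun v => r v w) p := Iff.rfl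

theorem RepB.zero (P : List X → Prop) : RepB r S P 0 :=
  ⟨0, Fin.elim0, Fin.elim0, Fin.elim0, Fin.elim0, Fin.elim0, fun i => i.elim0, by simp⟩

theorem RepB.smul {P : List X → Prop} {p : FreeAssocAlg k X} (c : k) (h : RepB r S P p) :
    RepB r S P (c • p) := by
  obtain ⟨n, α, s, a, b, sb, hc, rfl⟩ := h
  exact ⟨n, fun i => c * α i, s, a, b, sb, hc, by rw [Finset.smul_sum]; simp [smul_smul]⟩

theorem RepB.add {P : List X → Prop} {p q : FreeAssocAlg k X}
    (hp : RepB r S P p) (hq : RepB r S P q) : RepB r S P (p + q) := by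
  obtain ⟨n, α, s, a, b, sb, hc, rfl⟩ := hp
  obtain ⟨m, β, t, a', b', tb, hc', rfl⟩ := hq
  refine ⟨n + m, Fin.addCases α β, Fin.addCases s t, Fin.addCases a a', Fin.addCases b b',
    Fin.addCases sb tb, ?_, ?_⟩
  · intro i
    induction i using Fin.addCases with
    | left j => simpa using hc j
    | right j => simpa using hc' j
  · rw [Fin.sum_univ_add]
    simp

theorem RepB.neg {P : List X → Prop} {p : FreeAssocAlg k X} (h : RepB r S P p) :
    RepB r S P (-p) := by
  have := h.smul (-1)
  simpa using this

theorem RepB.sub {P : List X → Prop} {p q : FreeAssocAlg k X}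
    (hp : RepB r S P p) (hq : RepB r S P q) : RepB r S P (p - q) := by
  have := hp.add hq.neg
  simpa [sub_eq_add_neg] using this

theorem RepB.mono {P Q : List X → Prop} {p : FreeAssocAlg k X}
    (hPQ : ∀ v, P v → Q v) (h : RepB r S P p) : RepB r S Q p := by
  obtain ⟨n, α, s, a, b, sb, hc, rfl⟩ := h
  exact ⟨n, α, s, a, b, sb, fun i => ⟨(hc i).1, (hc i).2.1, hPQ _ (hc i).2.2⟩, rfl⟩

theorem RepB.single {P : List X → Prop} {s : FreeAssocAlg k X} (hs : s ∈ S) {sb : List X}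
    (hsb : IsLeadingWordR r s sb) (a b : List X) (hP : P (a ++ sb ++ b)) :
    RepB r S P (monom k a * s * monom k b) := by
  refine ⟨1, fun _ => 1, fun _ => s, fun _ => a, fun _ => b, fun _ => sb,
    fun _ => ⟨hs, hsb, hP⟩, ?_⟩
  simp

theorem RepB.sum {ι : Type*} {P : List X → Prop} (t : Finset ι) (g : ι → FreeAssocAlg k X)
    (h : ∀ i ∈ t, RepB r S P (g i)) : RepB r S P (∑ i ∈ t, g i) := by
  classical
  induction t using Finset.induction with
  | empty => simpa using RepB.zero (r := r) (S := S) P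
  | @insert a t' ha ih =>
    rw [Finset.sum_insert ha]
    exact (h a (Finset.mem_insert_self _ _)).add
      (ih fun i hi => h i (Finset.mem_insert_of_mem hi))

theorem RepB.conj {P Q : List X → Prop} {p : FreeAssocAlg k X} (a b : List X)
    (h : RepB r S P p) (hPQ : ∀ v, P v → Q (a ++ v ++ b)) :
    RepB r S Q (monom k a * p * monom k b) := by
  obtain ⟨n, α, s, c, d, sb, hc, rfl⟩ := h
  refine ⟨n, α, s, fun i => a ++ c i, fun i => d i ++ b, sb, ?_, ?_⟩
  · intro i
    refine ⟨(hc i).1, (hc i).2.1, ?_⟩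
    have := hPQ _ (hc i).2.2
    simp only [List.append_assoc] at this ⊢
    exact this
  · rw [Finset.mul_sum, Finset.sum_mul]
    refine Finset.sum_congr rfl fun i _ => ?_
    rw [mul_smul_comm, smul_mul_assoc]
    congr 1
    rw [← monom_mul_monom, ← monom_mul_monom]
    simp [mul_assoc]

theorem single_eq_smul_monom (x : FreeMonoid X) (c : k) :
    MonoidAlgebra.single x c = c • monom k (FreeMonoid.toList x) := by
  rw [monom, MonoidAlgebra.smul_single', mul_one]
  rfl

theorem RepB.sand {P : List X → Prop} {s : FreeAssocAlg k X} (hs : s ∈ S) {sb : List X}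
    (hsb : IsLeadingWordR r s sb) (q1 q2 : FreeAssocAlg k X)
    (h : ∀ u v, coeffW q1 u ≠ 0 → coeffW q2 v ≠ 0 → P (u ++ sb ++ v)) :
    RepB r S P (q1 * s * q2) := by
  have key : q1 * s * q2 = ∑ x ∈ q1.coeff.support, ∑ y ∈ q2.coeff.support,
      (q1.coeff x * q2.coeff y) • (monom k (FreeMonoid.toList x) * s * monom k (FreeMonoid.toList y)) := by
    conv_lhs => rw [← MonoidAlgebra.sum_coeff_single q1, ← MonoidAlgebra.sum_coeff_single q2]
    rw [Finsupp.sum, Finsupp.sum, Finset.sum_mul, Finset.sum_mul]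
    refine Finset.sum_congr rfl fun x hx => ?_
    rw [Finset.mul_sum]
    refine Finset.sum_congr rfl fun y hy => ?_
    rw [single_eq_smul_monom, single_eq_smul_monom, smul_mul_assoc, smul_mul_assoc,
      mul_smul_comm, smul_smul]
  rw [key]
  refine RepB.sum _ _ fun x hx => RepB.sum _ _ fun y hy => RepB.smul _ ?_
  exact RepB.single hs hsb _ _
    (h _ _ (Finsupp.mem_support_iff.1 hx) (Finsupp.mem_support_iff.1 hy))

/-! ### ideal membership -/

theorem sandwich_mem_span {s : FreeAssocAlg k X} (hs : s ∈ S) (a b : List X) :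
    monom k a * s * monom k b ∈ TwoSidedIdeal.span S :=
  TwoSidedIdeal.mul_mem_right _ _ _
    (TwoSidedIdeal.mul_mem_left _ _ _ (TwoSidedIdeal.subset_span hs))

theorem smul_mem_tsi (I : TwoSidedIdeal (FreeAssocAlg k X)) (c : k) {x : FreeAssocAlg k X}
    (hx : x ∈ I) : c • x ∈ I := by
  rw [← one_mul x, ← smul_mul_assoc]
  exact I.mul_mem_left _ _ hx

theorem RepB.mem_span {P : List X → Prop} {p : FreeAssocAlg k X} (h : RepB r S P p) :
    p ∈ TwoSidedIdeal.span S := by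
  obtain ⟨n, α, s, a, b, sb, hc, rfl⟩ := h
  refine Finset.sum_induction _ (· ∈ TwoSidedIdeal.span S)
    (fun x y hx hy => (TwoSidedIdeal.span S).add_mem hx hy) ((TwoSidedIdeal.span S).zero_mem) ?_
  intro i _
  exact smul_mem_tsi _ _ (sandwich_mem_span (hc i).1 _ _)

theorem mem_span_iff_repB
    (hmonic : ∀ s ∈ S, ∃ u : List X, IsLeadingWordR r s u ∧ coeffW s u = 1)
    {f : FreeAssocAlg k X} :
    f ∈ TwoSidedIdeal.span S ↔ RepB r S (fun _ => True) f := by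
  constructor
  · intro hf
    let I : TwoSidedIdeal (FreeAssocAlg k X) := TwoSidedIdeal.mk'
      {g | RepB r S (fun _ => True) g}
      (by show RepB r S (fun _ => True) 0; exact RepB.zero _)
      (by intro x y hx hy; show RepB r S (fun _ => True) (x + y)
          exact RepB.add hx hy)
      (by intro x hx; show RepB r S (fun _ => True) (-x); exact RepB.neg hx)
      (by
        intro x p hp
        show RepB r S (fun _ => True) (x * p)
        replace hp : RepB r S (fun _ => True) p := hp
        obtain ⟨n, α, s', a, b, sb, hc, rfl⟩ := hp
        rw [Finset.mul_sum]
        refine RepB.sum _ _ fun i _ => ?_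
        rw [mul_smul_comm]
        refine RepB.smul _ ?_
        have heq : x * (monom k (a i) * s' i * monom k (b i)) =
            (x * monom k (a i)) * s' i * monom k (b i) := by
          simp [mul_assoc]
        rw [heq]
        exact RepB.sand (hc i).1 (hc i).2.1 _ _ (fun _ _ _ _ => by trivial))
      (by
        intro p x hp
        show RepB r S (fun _ => True) (p * x)
        replace hp : RepB r S (fun _ => True) p := hp
        obtain ⟨n, α, s', a, b, sb, hc, rfl⟩ := hp
        rw [Finset.sum_mul]
        refine RepB.sum _ _ fun i _ => ?_
        rw [smul_mul_assoc]
        refine RepB.smul _ ?_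
        have heq : (monom k (a i) * s' i * monom k (b i)) * x =
            monom k (a i) * s' i * (monom k (b i) * x) := by
          simp [mul_assoc]
        rw [heq]
        exact RepB.sand (hc i).1 (hc i).2.1 _ _ (fun _ _ _ _ => by trivial))
    have hsub : S ⊆ (I : Set (FreeAssocAlg k X)) := by
      intro s hs
      obtain ⟨u, hu, _⟩ := hmonic s hs
      have h1 : s = monom k [] * s * monom k [] := by
        rw [monom_nil, one_mul, mul_one]
      rw [SetLike.mem_coe]
      show s ∈ TwoSidedIdeal.mk' _ _ _ _ _ _
      rw [TwoSidedIdeal.mem_mk']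
      simp only [Set.mem_setOf_eq]
      rw [h1]
      exact RepB.single hs hu _ _ (by trivial)
    have key := TwoSidedIdeal.mem_span_iff.1 hf I hsub
    rwa [show I = TwoSidedIdeal.mk' _ _ _ _ _ _ from rfl, TwoSidedIdeal.mem_mk'] at key
  · exact RepB.mem_span

theorem RepB.coeff_bound (htrans : Transitive r)
    (hmono : ∀ u v a b : List X, r u v → r (a ++ u ++ b) (a ++ v ++ b))
    {w : List X} {f : FreeAssocAlg k X} (h : RepB r S (fun v => rle r v w) f) :
    ∀ u, coeffW f u ≠ 0 → rle r u w := by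
  obtain ⟨n, α, s, a, b, sb, hc, rfl⟩ := h
  intro u hu
  rw [coeffW_sum] at hu
  obtain ⟨i, -, hi⟩ := Finset.exists_ne_zero_of_sum_ne_zero hu
  rw [coeffW_smul] at hi
  have h2 : coeffW (monom k (a i) * s i * monom k (b i)) u ≠ 0 := right_ne_zero_of_mul hi
  obtain ⟨t, rfl, ht⟩ := coeffW_sandwich_ne_zero h2
  have h3 := (hc i).2.1.2 t ht
  have h4 : rle r (a i ++ t ++ b i) (a i ++ sb i ++ b i) := by
    rcases h3 with rfl | h3
    · exact Or.inl rfl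
    · exact Or.inr (hmono _ _ _ _ h3)
  exact rle_trans htrans h4 (hc i).2.2

/-- `u` is `S`-irreducible. -/
def Irr (r : List X → List X → Prop) (S : Set (FreeAssocAlg k X)) (u : List X) : Prop :=
  ¬ ∃ (s : FreeAssocAlg k X) (a b sb : List X),
      s ∈ S ∧ IsLeadingWordR r s sb ∧ u = a ++ sb ++ b

theorem lw_lt_of_coeff_lt (htrans : Transitive r)
    (htri : ∀ u v : List X, r u v ∨ u = v ∨ r v u) {f : FreeAssocAlg k X} {u : List X}
    (h : ∀ v, coeffW f v ≠ 0 → r v u) :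
    f = 0 ∨ ∃ u', IsLeadingWordR r f u' ∧ r u' u := by
  rcases eq_or_ne f 0 with rfl | hf
  · exact Or.inl rfl
  · obtain ⟨u', hu'⟩ := exists_lw htrans htri hf
    exact Or.inr ⟨u', hu', h u' hu'.1⟩

/-- The key normal-form (reduction) lemma. -/
theorem red (hwf : WellFounded r) (htrans : Transitive r)
    (htri : ∀ u v : List X, r u v ∨ u = v ∨ r v u)
    (hmono : ∀ u v a b : List X, r u v → r (a ++ u ++ b) (a ++ v ++ b))
    (hmonic : ∀ s ∈ S, ∃ u : List X, IsLeadingWordR r s u ∧ coeffW s u = 1) :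
    ∀ u : List X, ∀ f : FreeAssocAlg k X, IsLeadingWordR r f u →
      ∃ g h : FreeAssocAlg k X, f = g + h ∧
        (∀ v, coeffW g v ≠ 0 → Irr r S v ∧ rle r v u) ∧
        RepB r S (fun v => rle r v u) h := by
  intro u
  induction u using hwf.induction with
  | _ u IH =>
  intro f hf
  by_cases hirr : Irr r S u
  · -- irreducible leading word
    set c := coeffW f u with hc
    set f' := f - c • monom k u with hf'
    have hsmall : ∀ v, coeffW f' v ≠ 0 → r v u := by
      intro v hv
      rw [hf', coeffW_sub, coeffW_smul] at hv
      rcases eq_or_ne v u with rfl | hvu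
      · rw [coeffW_monom_self, mul_one, sub_self] at hv
        exact absurd rfl hv
      · rw [coeffW_monom_ne (Ne.symm hvu), mul_zero, sub_zero] at hv
        rcases hf.2 v hv with h | h
        · exact absurd h hvu
        · exact h
    have hfe : f = c • monom k u + f' := by rw [hf']; abel
    rcases lw_lt_of_coeff_lt htrans htri hsmall with h0 | ⟨u', hu', hru⟩
    · refine ⟨c • monom k u, 0, by rw [hfe, h0], ?_, RepB.zero _⟩
      intro v hv
      rw [coeffW_smul] at hv
      have := eq_of_coeffW_monom_ne_zero (right_ne_zero_of_mul hv)
      subst this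
      exact ⟨hirr, Or.inl rfl⟩
    · obtain ⟨g', h', hfe', hg', hh'⟩ := IH u' hru f' hu'
      refine ⟨c • monom k u + g', h', by rw [hfe, hfe', add_assoc], ?_, ?_⟩
      · intro v hv
        rw [coeffW_add, coeffW_smul] at hv
        by_cases hg : coeffW g' v ≠ 0
        · obtain ⟨hi, hle⟩ := hg' v hg
          exact ⟨hi, rle_trans htrans hle (Or.inr hru)⟩
        · push_neg at hg
          rw [hg, add_zero] at hv
          have := eq_of_coeffW_monom_ne_zero (right_ne_zero_of_mul hv)
          subst this
          exact ⟨hirr, Or.inl rfl⟩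
      · exact hh'.mono fun v hle => rle_trans htrans hle (Or.inr hru)
  · -- reducible leading word
    rw [Irr, not_not] at hirr
    obtain ⟨s, a, b, sb, hs, hsb, hu⟩ := hirr
    have hs1 : coeffW s sb = 1 := lw_monic hwf hmonic hs hsb
    set c := coeffW f u with hc
    set T := monom k a * s * monom k b with hT
    set f' := f - c • T with hf'
    have hTu : coeffW T u = 1 := by rw [hT, hu, coeffW_sandwich, hs1]
    have hsmall : ∀ v, coeffW f' v ≠ 0 → r v u := by
      intro v hv
      rw [hf', coeffW_sub, coeffW_smul] at hv
      rcases eq_or_ne v u with rfl | hvu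
      · rw [hTu, mul_one, sub_self] at hv
        exact absurd rfl hv
      · have : coeffW f v ≠ 0 ∨ coeffW T v ≠ 0 := by
          by_contra hcon
          push_neg at hcon
          rw [hcon.1, hcon.2, mul_zero, sub_zero] at hv
          exact hv rfl
        rcases this with h | h
        · rcases hf.2 v h with h' | h'
          · exact absurd h' hvu
          · exact h'
        · obtain ⟨t, rfl, ht⟩ := coeffW_sandwich_ne_zero h
          rcases hsb.2 t ht with rfl | h'
          · exact absurd hu.symm hvu
          · rw [hu]
            exact hmono _ _ _ _ h'
    have hfe : f = c • T + f' := by rw [hf']; abel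
    have hTrep : RepB r S (fun v => rle r v u) (c • T) :=
      RepB.smul c (RepB.single hs hsb a b (Or.inl hu.symm))
    rcases lw_lt_of_coeff_lt htrans htri hsmall with h0 | ⟨u', hu', hru⟩
    · exact ⟨0, c • T, by rw [hfe, h0, add_zero, zero_add], by simp, hTrep⟩
    · obtain ⟨g', h', hfe', hg', hh'⟩ := IH u' hru f' hu'
      refine ⟨g', c • T + h', by rw [hfe, hfe']; abel, ?_, ?_⟩
      · intro v hv
        obtain ⟨hi, hle⟩ := hg' v hv
        exact ⟨hi, rle_trans htrans hle (Or.inr hru)⟩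
      · exact hTrep.add (hh'.mono fun v hle => rle_trans htrans hle (Or.inr hru))

theorem exists_mid {a1 a2 t1 t2 : List X} (h : a1 ++ t1 = a2 ++ t2)
    (hl : a1.length ≤ a2.length) : ∃ c, a2 = a1 ++ c ∧ t1 = c ++ t2 := by
  rcases List.append_eq_append_iff.1 h with ⟨c, hc1, hc2⟩ | ⟨c, hc1, hc2⟩
  · exact ⟨c, hc1, hc2⟩
  · have hc : c = [] := by
      have := congrArg List.length hc1
      simp only [List.length_append] at this
      have : c.length = 0 := by omega
      exact List.eq_nil_of_length_eq_zero this
    subst hc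
    refine ⟨[], by simpa using hc1.symm, by simpa using hc2.symm⟩

theorem key_diff_aux (hwf : WellFounded r) (htrans : Transitive r)
    (htri : ∀ u v : List X, r u v ∨ u = v ∨ r v u)
    (hmono : ∀ u v a b : List X, r u v → r (a ++ u ++ b) (a ++ v ++ b))
    (hmonic : ∀ s ∈ S, ∃ u : List X, IsLeadingWordR r s u ∧ coeffW s u = 1)
    (hGSB : IsGSBAssR r S)
    {s1 s2 : FreeAssocAlg k X} (h1 : s1 ∈ S) (h2 : s2 ∈ S)
    {sb1 sb2 a1 b1 a2 b2 w : List X}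
    (hl1 : IsLeadingWordR r s1 sb1) (hl2 : IsLeadingWordR r s2 sb2)
    (hw1 : a1 ++ sb1 ++ b1 = w) (hw2 : a2 ++ sb2 ++ b2 = w)
    (hlen : a1.length ≤ a2.length) :
    RepB r S (fun v => r v w)
      (monom k a1 * s1 * monom k b1 - monom k a2 * s2 * monom k b2) := by
  have hm1 : coeffW s1 sb1 = 1 := lw_monic hwf hmonic h1 hl1
  have hm2 : coeffW s2 sb2 = 1 := lw_monic hwf hmonic h2 hl2
  have heq0 : a1 ++ (sb1 ++ b1) = a2 ++ (sb2 ++ b2) := by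
    simp only [← List.append_assoc]
    rw [hw1, hw2]
  obtain ⟨c, hc1, hc2⟩ := exists_mid heq0 hlen
  by_cases hcase : sb1.length ≤ c.length
  · -- disjoint case
    obtain ⟨e, he1, he2⟩ := exists_mid hc2 hcase
    -- a2 = a1 ++ sb1 ++ e,  b1 = e ++ sb2 ++ b2
    have hkey : monom k a1 * s1 * monom k b1 - monom k a2 * s2 * monom k b2 =
        (monom k a1 * (s1 - monom k sb1) * monom k e) * s2 * monom k b2 -
        monom k a1 * s1 * (monom k e * (s2 - monom k sb2) * monom k b2) := by
      have hb1 : monom k b1 = monom k e * monom k sb2 * monom k b2 := by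
        rw [monom_mul_monom, monom_mul_monom, he2, List.append_assoc]
      have ha2 : monom k a2 = monom k a1 * monom k sb1 * monom k e := by
        rw [monom_mul_monom, monom_mul_monom, hc1, he1, List.append_assoc]
      rw [hb1, ha2]
      noncomm_ring
    rw [hkey]
    refine RepB.sub ?_ ?_
    · refine RepB.sand h2 hl2 _ _ ?_
      intro u' v' hu' hv'
      obtain ⟨t, rfl, ht⟩ := coeffW_sandwich_ne_zero hu'
      rw [eq_of_coeffW_monom_ne_zero hv']
      have htl : r t sb1 := coeff_sub_lead hwf hl1 hm1 ht
      have := hmono t sb1 a1 (e ++ (sb2 ++ b2)) htl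
      rw [← hw1]
      simp only [List.append_assoc] at this ⊢
      rw [he2]
      simpa using this
    · refine RepB.sand h1 hl1 _ _ ?_
      intro u' v' hu' hv'
      rw [eq_of_coeffW_monom_ne_zero hu']
      obtain ⟨t, rfl, ht⟩ := coeffW_sandwich_ne_zero hv'
      have htl : r t sb2 := coeff_sub_lead hwf hl2 hm2 ht
      have := hmono t sb2 (a1 ++ sb1 ++ e) b2 htl
      rw [← hw1]
      simp only [List.append_assoc] at this ⊢
      rw [he2]
      simpa using this
  · -- overlap cases
    push_neg at hcase
    obtain ⟨d, hd1, hd2⟩ := exists_mid hc2.symm (le_of_lt hcase)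
    -- sb1 = c ++ d,  sb2 ++ b2 = d ++ b1
    have hdne : d ≠ [] := by
      intro hd
      rw [hd1, hd] at hcase
      simp at hcase
    by_cases hcase2 : d.length ≤ sb2.length
    · -- intersection composition
      obtain ⟨e, he1, he2⟩ := exists_mid hd2.symm hcase2
      -- sb2 = d ++ e,  b1 = e ++ b2
      have hcomp : IsAssComp s1 s2 sb1 sb2 (sb1 ++ e) (CompShape.inter c e)
          (s1 * monom k e - monom k c * s2) := by
        refine ⟨rfl, ?_, ?_, rfl⟩
        · rw [hd1, he1]
          simp [List.append_assoc]
        · rw [hd1, he1]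
          simp only [List.length_append]
          have : 0 < d.length := List.length_pos_iff.2 hdne
          omega
      have htriv : RepB r S (fun v => r v (sb1 ++ e)) (s1 * monom k e - monom k c * s2) :=
        trivialModAssR_iff_repB.1 (hGSB s1 s2 sb1 sb2 (sb1 ++ e) (CompShape.inter c e) _ h1 h2 hl1 hl2 hcomp)
      have hkey : monom k a1 * s1 * monom k b1 - monom k a2 * s2 * monom k b2 =
          monom k a1 * (s1 * monom k e - monom k c * s2) * monom k b2 := by
        have hb1 : monom k b1 = monom k e * monom k b2 := by rw [monom_mul_monom, he2]
        have ha2 : monom k a2 = monom k a1 * monom k c := by rw [monom_mul_monom, hc1]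
        rw [hb1, ha2]
        noncomm_ring
      rw [hkey]
      refine RepB.conj _ _ htriv ?_
      intro v hv
      have := hmono v (sb1 ++ e) a1 b2 hv
      rw [← hw1]
      simp only [List.append_assoc] at this ⊢
      rw [he2]
      simpa using this
    · -- inclusion composition
      push_neg at hcase2
      obtain ⟨e, he1, he2⟩ := exists_mid hd2 (le_of_lt hcase2)
      -- d = sb2 ++ e,  b2 = e ++ b1
      have hcomp : IsAssComp s1 s2 sb1 sb2 sb1 (CompShape.incl c e)
          (s1 - monom k c * s2 * monom k e) := by
        refine ⟨rfl, ?_, rfl⟩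
        rw [hd1, he1]
        simp [List.append_assoc]
      have htriv : RepB r S (fun v => r v sb1) (s1 - monom k c * s2 * monom k e) :=
        trivialModAssR_iff_repB.1 (hGSB s1 s2 sb1 sb2 sb1 (CompShape.incl c e) _ h1 h2 hl1 hl2 hcomp)
      have hkey : monom k a1 * s1 * monom k b1 - monom k a2 * s2 * monom k b2 =
          monom k a1 * (s1 - monom k c * s2 * monom k e) * monom k b1 := by
        have hb2 : monom k b2 = monom k e * monom k b1 := by rw [monom_mul_monom, he2]
        have ha2 : monom k a2 = monom k a1 * monom k c := by rw [monom_mul_monom, hc1]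
        rw [hb2, ha2]
        noncomm_ring
      rw [hkey]
      refine RepB.conj _ _ htriv ?_
      intro v hv
      have := hmono v sb1 a1 b1 hv
      rw [← hw1]
      exact this

theorem key_diff (hwf : WellFounded r) (htrans : Transitive r)
    (htri : ∀ u v : List X, r u v ∨ u = v ∨ r v u)
    (hmono : ∀ u v a b : List X, r u v → r (a ++ u ++ b) (a ++ v ++ b))
    (hmonic : ∀ s ∈ S, ∃ u : List X, IsLeadingWordR r s u ∧ coeffW s u = 1)
    (hGSB : IsGSBAssR r S)
    {s1 s2 : FreeAssocAlg k X} (h1 : s1 ∈ S) (h2 : s2 ∈ S)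
    {sb1 sb2 a1 b1 a2 b2 w : List X}
    (hl1 : IsLeadingWordR r s1 sb1) (hl2 : IsLeadingWordR r s2 sb2)
    (hw1 : a1 ++ sb1 ++ b1 = w) (hw2 : a2 ++ sb2 ++ b2 = w) :
    RepB r S (fun v => r v w)
      (monom k a1 * s1 * monom k b1 - monom k a2 * s2 * monom k b2) := by
  rcases le_total a1.length a2.length with h | h
  · exact key_diff_aux hwf htrans htri hmono hmonic hGSB h1 h2 hl1 hl2 hw1 hw2 h
  · have := (key_diff_aux hwf htrans htri hmono hmonic hGSB h2 h1 hl2 hl1 hw2 hw1 h).neg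
    rwa [neg_sub] at this

theorem sum_split {M : Type*} [AddCommMonoid M] {n : ℕ} (g : Fin n → M) {i j : Fin n}
    (hne : i ≠ j) :
    ∑ i', g i' = g i + g j + ∑ i' ∈ (Finset.univ.erase i).erase j, g i' := by
  classical
  have hj : j ∈ Finset.univ.erase i := Finset.mem_erase.2 ⟨hne.symm, Finset.mem_univ j⟩
  rw [← Finset.add_sum_erase _ g (Finset.mem_univ i), ← Finset.add_sum_erase _ g hj, add_assoc]

/-- The index set attaining the bound `w`. -/
noncomputable def cntF {n : ℕ} (v : Fin n → List X) (w : List X) : Finset (Fin n) :=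
  @Finset.filter _ (fun i => v i = w) (Classical.decPred _) Finset.univ

/-- number of indices whose bounding word is exactly `w` -/
noncomputable def cnt {n : ℕ} (v : Fin n → List X) (w : List X) : ℕ := (cntF v w).card

theorem mem_cntF {n : ℕ} {v : Fin n → List X} {w : List X} {i : Fin n} :
    i ∈ cntF v w ↔ v i = w := by
  unfold cntF
  rw [@Finset.mem_filter _ _ (Classical.decPred _)]
  simp

theorem cnt_le {n : ℕ} (v : Fin n → List X) (w : List X) : cnt v w ≤ n := by
  refine le_trans (Finset.card_le_card (t := Finset.univ) fun i _ => Finset.mem_univ i) ?_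
  simp

theorem cnt_congr {n : ℕ} {v1 v2 : Fin n → List X} (w : List X) (h : ∀ i, v1 i = v2 i) :
    cnt v1 w = cnt v2 w := by
  rw [show v1 = v2 from funext h]

theorem cnt_eq_zero {n : ℕ} (v : Fin n → List X) (w : List X) (h : ∀ i, v i ≠ w) :
    cnt v w = 0 := by
  unfold cnt
  rw [Finset.card_eq_zero]
  exact Finset.eq_empty_of_forall_notMem fun i hi => h i (mem_cntF.1 hi)

theorem cnt_pos {n : ℕ} {v : Fin n → List X} {w : List X} {i : Fin n} (h : v i = w) :
    1 ≤ cnt v w :=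
  Finset.card_pos.2 ⟨i, mem_cntF.2 h⟩

theorem two_of_cnt {n : ℕ} {v : Fin n → List X} {w : List X} (h : 2 ≤ cnt v w) :
    ∃ i j : Fin n, i ≠ j ∧ v i = w ∧ v j = w := by
  obtain ⟨i, hi, j, hj, hne⟩ := Finset.one_lt_card.1 h
  exact ⟨i, j, hne, mem_cntF.1 hi, mem_cntF.1 hj⟩

theorem cnt_lt_two_unique {n : ℕ} {v : Fin n → List X} {w : List X} (h : cnt v w < 2)
    {i : Fin n} (hi : v i = w) : ∀ j, v j = w → j = i := by
  intro j hj
  by_contra hne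
  have h2 : 1 < (cntF v w).card :=
    Finset.one_lt_card.2 ⟨j, mem_cntF.2 hj, i, mem_cntF.2 hi, hne⟩
  replace h : (cntF v w).card < 2 := h
  omega

theorem cnt_drop_le {n : ℕ} (v : Fin (n + 1) → List X) (w : List X) (i : Fin (n + 1))
    (hi : v i = w) : cnt (fun j' => v (i.succAbove j')) w ≤ cnt v w - 1 := by
  have hkey : (cntF (fun j' => v (i.succAbove j')) w).card ≤ ((cntF v w).erase i).card := by
    refine Finset.card_le_card_of_injOn (fun j' => i.succAbove j') ?_ ?_
    · intro j' hj'
      have h2 := mem_cntF.1 hj'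
      exact Finset.mem_erase.2 ⟨Fin.succAbove_ne i j', mem_cntF.2 h2⟩
    · intro x _ y _ hxy
      exact Fin.succAbove_right_injective hxy
  calc cnt (fun j' => v (i.succAbove j')) w ≤ ((cntF v w).erase i).card := hkey
    _ = cnt v w - 1 := Finset.card_erase_of_mem (mem_cntF.2 hi)

theorem cnt_addCases_le {p n : ℕ} (v1 : Fin p → List X) (v2 : Fin n → List X) (w : List X)
    (h1 : ∀ l, v1 l ≠ w) :
    cnt (fun l : Fin (p + n) => Fin.append v1 v2 l) w ≤ cnt v2 w := by
  cases n with
  | zero =>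
    have hz : ∀ l : Fin (p + 0), (fun l : Fin (p + 0) => Fin.append v1 v2 l) l ≠ w := by
      intro l
      induction l using Fin.addCases with
      | left l' =>
        show Fin.append v1 v2 (Fin.castAdd 0 l') ≠ w
        rw [Fin.append_left]
        exact h1 l'
      | right j' => exact j'.elim0
    rw [cnt_eq_zero _ _ hz]
    exact Nat.zero_le _
  | succ n' =>
    show (cntF _ w).card ≤ (cntF v2 w).card
    refine Finset.card_le_card_of_injOn
      (fun l => if h : p ≤ l.val then ⟨l.val - p, by have := l.isLt; omega⟩
        else ⟨0, n'.succ_pos⟩) ?_ ?_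
    · intro l hl
      replace hl : Fin.append v1 v2 l = w := mem_cntF.1 hl
      have hp : p ≤ l.val := by
        by_contra hlt
        push_neg at hlt
        have hcast : l = Fin.castAdd (n' + 1) ⟨l.val, hlt⟩ := Fin.ext rfl
        rw [hcast, Fin.append_left] at hl
        exact h1 _ hl
      have hnat : l = Fin.natAdd p ⟨l.val - p, by have := l.isLt; omega⟩ := by
        apply Fin.ext
        show l.val = p + (l.val - p)
        omega
      rw [hnat, Fin.append_right] at hl
      refine mem_cntF.2 ?_
      show v2 (if h : p ≤ l.val then _ else _) = w
      rw [dif_pos hp]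
      exact hl
    · intro x hx y hy hxy
      replace hx : Fin.append v1 v2 x = w := mem_cntF.1 hx
      replace hy : Fin.append v1 v2 y = w := mem_cntF.1 hy
      have hpx : p ≤ x.val := by
        by_contra hlt
        push_neg at hlt
        have hc : x = Fin.castAdd (n' + 1) ⟨x.val, hlt⟩ := Fin.ext rfl
        rw [hc, Fin.append_left] at hx
        exact h1 _ hx
      have hpy : p ≤ y.val := by
        by_contra hlt
        push_neg at hlt
        have hc : y = Fin.castAdd (n' + 1) ⟨y.val, hlt⟩ := Fin.ext rfl
        rw [hc, Fin.append_left] at hy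
        exact h1 _ hy
      simp only [dif_pos hpx, dif_pos hpy] at hxy
      have hval := congrArg Fin.val hxy
      simp only at hval
      refine Fin.ext ?_
      have := x.isLt
      have := y.isLt
      omega

theorem claim (hwf : WellFounded r) (htrans : Transitive r)
    (htri : ∀ u v : List X, r u v ∨ u = v ∨ r v u)
    (hmono : ∀ u v a b : List X, r u v → r (a ++ u ++ b) (a ++ v ++ b))
    (hmonic : ∀ s ∈ S, ∃ u : List X, IsLeadingWordR r s u ∧ coeffW s u = 1)
    (hGSB : IsGSBAssR r S) :
    ∀ w : List X, ∀ m : ℕ, ∀ f : FreeAssocAlg k X, f ≠ 0 →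
      ∀ (n : ℕ) (α : Fin n → k) (s : Fin n → FreeAssocAlg k X) (a b sb : Fin n → List X),
      (∀ i, s i ∈ S ∧ IsLeadingWordR r (s i) (sb i) ∧ rle r (a i ++ sb i ++ b i) w) →
      cnt (fun i => a i ++ sb i ++ b i) w ≤ m →
      f = (∑ i, α i • (monom k (a i) * s i * monom k (b i))) →
      ∀ fb, IsLeadingWordR r f fb →
        ∃ s' ∈ S, ∃ a' b' sb' : List X, IsLeadingWordR r s' sb' ∧ fb = a' ++ sb' ++ b' := by
  intro w
  induction w using hwf.induction with
  | _ w IHw =>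
  intro m
  induction m using Nat.strong_induction_on with
  | _ m IHm =>
  intro f hf n α s a b sb hcond hcard hsum fb hfb
  classical
  cases n with
  | zero =>
    rw [Finset.univ_eq_empty, Finset.sum_empty] at hsum
    exact absurd hsum hf
  | succ n' =>
  set v : Fin (n' + 1) → List X := fun i => a i ++ sb i ++ b i with hv
  set T : Fin (n' + 1) → FreeAssocAlg k X :=
    fun i => monom k (a i) * s i * monom k (b i) with hT
  rcases em (∃ i, v i = w) with hex | hnex
  swap
  · -- no term attains the bound: decrease w
    push_neg at hnex
    have hstrict : ∀ i, r (v i) w := by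
      intro i
      rcases (hcond i).2.2 with h | h
      · exact absurd h (hnex i)
      · exact h
    have hne' : (Finset.univ.image v).Nonempty :=
      ⟨v 0, Finset.mem_image_of_mem v (Finset.mem_univ 0)⟩
    obtain ⟨w₁, hw₁mem, hw₁max⟩ := finset_max htrans htri _ hne'
    obtain ⟨i₁, -, hi₁⟩ := Finset.mem_image.1 hw₁mem
    have hrw₁ : r w₁ w := hi₁ ▸ hstrict i₁
    refine IHw w₁ hrw₁ (n' + 1) f hf (n' + 1) α s a b sb ?_ (cnt_le _ _) hsum fb hfb
    intro i
    refine ⟨(hcond i).1, (hcond i).2.1, ?_⟩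
    exact hw₁max (v i) (Finset.mem_image_of_mem v (Finset.mem_univ i))
  · by_cases h2 : 2 ≤ cnt v w
    · -- at least two attain the bound: use key_diff to merge
      obtain ⟨i, j, hne, hvi, hvj⟩ := two_of_cnt h2
      have hd : RepB r S (fun u => r u w) (T i - T j) :=
        key_diff hwf htrans htri hmono hmonic hGSB (hcond i).1 (hcond j).1
          (hcond i).2.1 (hcond j).2.1 hvi hvj
      obtain ⟨p, α', s', a', b', sb', hc', hd'⟩ := hd
      set β := Function.update (Function.update α i 0) j (α i + α j) with hβ
      have hβi : β i = 0 := by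
        rw [hβ, Function.update_of_ne hne, Function.update_self]
      have hβj : β j = α i + α j := by
        rw [hβ, Function.update_self]
      have hβo : ∀ x, x ≠ i → x ≠ j → β x = α x := by
        intro x hxi hxj
        rw [hβ, Function.update_of_ne hxj, Function.update_of_ne hxi]
      have hsplit : f = α i • (T i - T j) + ∑ i', β i' • T i' := by
        rw [hsum, sum_split (fun i' => α i' • T i') hne, sum_split (fun i' => β i' • T i') hne]
        rw [hβi, hβj]
        have hrest : (∑ i' ∈ (Finset.univ.erase i).erase j, β i' • T i') =
            ∑ i' ∈ (Finset.univ.erase i).erase j, α i' • T i' := by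
          refine Finset.sum_congr rfl fun x hx => ?_
          have h1 := Finset.mem_erase.1 hx
          rw [hβo x (Finset.mem_erase.1 h1.2).1 h1.1]
        rw [hrest, smul_sub, add_smul, zero_smul]
        abel
      have hdrop : (∑ i', β i' • T i') =
          ∑ j' : Fin n', β (i.succAbove j') • T (i.succAbove j') := by
        rw [Fin.sum_univ_succAbove _ i, hβi, zero_smul, zero_add]
      have hsum2 : f = (∑ l : Fin (p + n'),
          (Fin.append (fun l' => α i * α' l') (fun j' => β (i.succAbove j')) l) •
          (monom k ((Fin.append a' (fun j' => a (i.succAbove j'))) l) *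
            (Fin.append s' (fun j' => s (i.succAbove j'))) l *
            monom k ((Fin.append b' (fun j' => b (i.succAbove j'))) l))) := by
        rw [hsplit, hdrop, Fin.sum_univ_add]
        simp only [Fin.append_left, Fin.append_right]
        congr 1
        rw [hd', Finset.smul_sum]
        refine Finset.sum_congr rfl fun l _ => ?_
        rw [smul_smul]
      have hcond2 : ∀ l : Fin (p + n'),
          (Fin.append s' (fun j' => s (i.succAbove j'))) l ∈ S ∧
          IsLeadingWordR r ((Fin.append s' (fun j' => s (i.succAbove j'))) l)
            ((Fin.append sb' (fun j' => sb (i.succAbove j'))) l) ∧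
          rle r ((Fin.append a' (fun j' => a (i.succAbove j'))) l ++
            (Fin.append sb' (fun j' => sb (i.succAbove j'))) l ++
            (Fin.append b' (fun j' => b (i.succAbove j'))) l) w := by
        intro l
        induction l using Fin.addCases with
        | left l' =>
          simp only [Fin.append_left]
          exact ⟨(hc' l').1, (hc' l').2.1, Or.inr (hc' l').2.2⟩
        | right j' =>
          simp only [Fin.append_right]
          exact ⟨(hcond _).1, (hcond _).2.1, (hcond _).2.2⟩
      have hcnt2 : cnt (fun l => (Fin.append a' (fun j' => a (i.succAbove j'))) l ++
          (Fin.append sb' (fun j' => sb (i.succAbove j'))) l ++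
          (Fin.append b' (fun j' => b (i.succAbove j'))) l) w ≤ cnt v w - 1 := by
        have he : cnt (fun l => (Fin.append a' (fun j' => a (i.succAbove j'))) l ++
            (Fin.append sb' (fun j' => sb (i.succAbove j'))) l ++
            (Fin.append b' (fun j' => b (i.succAbove j'))) l) w =
            cnt (fun l : Fin (p + n') => Fin.append (fun l' => a' l' ++ sb' l' ++ b' l')
              (fun j' => v (i.succAbove j')) l) w := by
          refine cnt_congr w ?_
          intro l
          induction l using Fin.addCases with
          | left l' => simp only [Fin.append_left]
          | right j' =>
            simp only [Fin.append_right]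
            rfl
        rw [he]
        refine le_trans (cnt_addCases_le _ _ _ ?_) (cnt_drop_le v w i hvi)
        intro l' hEq
        exact r_irrefl hwf w (hEq ▸ (hc' l').2.2)
      have hle : cnt v w ≤ m := hcard
      have hlt : cnt v w - 1 < m := by omega
      exact IHm (cnt v w - 1) hlt f hf (p + n') _ _ _ _ _ hcond2 hcnt2 hsum2 fb hfb
    · -- exactly one term attains the bound
      push_neg at h2
      obtain ⟨i₀, hvi₀⟩ := hex
      have huniq : ∀ j, v j = w → j = i₀ := cnt_lt_two_unique h2 hvi₀
      have hm1 : 1 ≤ m := le_trans (cnt_pos hvi₀) hcard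
      by_cases hα : α i₀ = 0
      · -- drop the vanishing term
        have hsum2 : f = ∑ j' : Fin n', α (i₀.succAbove j') • (monom k (a (i₀.succAbove j')) *
            s (i₀.succAbove j') * monom k (b (i₀.succAbove j'))) := by
          rw [hsum, Fin.sum_univ_succAbove _ i₀, hα, zero_smul, zero_add]
        have hcnt2 : cnt (fun j' : Fin n' =>
            a (i₀.succAbove j') ++ sb (i₀.succAbove j') ++ b (i₀.succAbove j')) w ≤ 0 := by
          refine le_of_eq (cnt_eq_zero _ _ ?_)
          intro j' hEq
          exact Fin.succAbove_ne i₀ j' (huniq _ hEq)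
        exact IHm 0 (by omega) f hf n' _ _ _ _ _ (fun j' => hcond (i₀.succAbove j'))
          hcnt2 hsum2 fb hfb
      · -- the leading word of f is w itself
        have hcoef : coeffW f w = α i₀ := by
          rw [hsum, coeffW_sum]
          rw [Finset.sum_eq_single i₀]
          · rw [coeffW_smul]
            have hone : coeffW (T i₀) w = 1 := by
              rw [hT]
              have hw' : w = a i₀ ++ sb i₀ ++ b i₀ := hvi₀.symm
              rw [hw', coeffW_sandwich]
              exact lw_monic hwf hmonic (hcond i₀).1 (hcond i₀).2.1
            rw [hone, mul_one]
          · intro x _ hx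
            rw [coeffW_smul]
            have hxF : v x ≠ w := fun hEq => hx (huniq x hEq)
            have hTz : coeffW (T x) w = 0 := by
              by_contra hnz
              obtain ⟨t', heq, ht'⟩ := coeffW_sandwich_ne_zero hnz
              rcases (hcond x).2.1.2 t' ht' with h' | h'
              · exact hxF (by rw [hv]; rw [heq, h'])
              · have hr1 : r w (v x) := by
                  rw [heq]
                  exact hmono _ _ _ _ h'
                rcases (hcond x).2.2 with h'' | h''
                · exact hxF h''
                · exact r_asymm hwf hr1 h''
            rw [hTz, mul_zero]
          · intro h
            exact absurd (Finset.mem_univ i₀) h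
        have hbound : ∀ u', coeffW f u' ≠ 0 → rle r u' w :=
          RepB.coeff_bound htrans hmono ⟨n' + 1, α, s, a, b, sb, hcond, hsum⟩
        have h1 := hfb.2 w (by rw [hcoef]; exact hα)
        rcases h1 with h1 | h1
        · refine ⟨s i₀, (hcond i₀).1, a i₀, b i₀, sb i₀, (hcond i₀).2.1, ?_⟩
          rw [← h1, ← hvi₀]
        · rcases hbound fb hfb.1 with h2' | h2'
          · exact absurd (h2' ▸ h1) (r_irrefl hwf fb)
          · exact absurd h1 (r_asymm hwf h2')
theorem P1_imp_P2 (hwf : WellFounded r) (htrans : Transitive r)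
    (htri : ∀ u v : List X, r u v ∨ u = v ∨ r v u)
    (hmono : ∀ u v a b : List X, r u v → r (a ++ u ++ b) (a ++ v ++ b))
    (hmonic : ∀ s ∈ S, ∃ u : List X, IsLeadingWordR r s u ∧ coeffW s u = 1)
    (hGSB : IsGSBAssR r S) :
    ∀ f : FreeAssocAlg k X, f ∈ TwoSidedIdeal.span S → f ≠ 0 →
      ∀ fb : List X, IsLeadingWordR r f fb →
        ∃ s ∈ S, ∃ a b sb : List X, IsLeadingWordR r s sb ∧ fb = a ++ sb ++ b := by
  intro f hfm hf fb hfb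
  obtain ⟨n, α, s, a, b, sb, hcond, hsum⟩ := (mem_span_iff_repB hmonic).1 hfm
  cases n with
  | zero =>
    rw [Finset.univ_eq_empty, Finset.sum_empty] at hsum
    exact absurd hsum hf
  | succ n' =>
    classical
    set v : Fin (n' + 1) → List X := fun i => a i ++ sb i ++ b i with hv
    have hne' : (Finset.univ.image v).Nonempty :=
      ⟨v 0, Finset.mem_image_of_mem v (Finset.mem_univ 0)⟩
    obtain ⟨w₁, hw₁mem, hw₁max⟩ := finset_max htrans htri _ hne'
    refine claim hwf htrans htri hmono hmonic hGSB w₁ (n' + 1) f hf (n' + 1) α s a b sb ?_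
      (cnt_le _ _) hsum fb hfb
    intro i
    exact ⟨(hcond i).1, (hcond i).2.1,
      hw₁max (v i) (Finset.mem_image_of_mem v (Finset.mem_univ i))⟩

theorem zero_of_irr (htrans : Transitive r)
    (htri : ∀ u v : List X, r u v ∨ u = v ∨ r v u)
    (hP2 : ∀ f : FreeAssocAlg k X, f ∈ TwoSidedIdeal.span S → f ≠ 0 →
      ∀ fb : List X, IsLeadingWordR r f fb →
        ∃ s ∈ S, ∃ a b sb : List X, IsLeadingWordR r s sb ∧ fb = a ++ sb ++ b) :
    ∀ g : FreeAssocAlg k X, g ∈ TwoSidedIdeal.span S →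
      (∀ x, coeffW g x ≠ 0 → Irr r S x) → g = 0 := by
  intro g hg hirr
  by_contra hgz
  obtain ⟨u, hu⟩ := exists_lw htrans htri hgz
  obtain ⟨s, hs, a, b, sb, hsb, heq⟩ := hP2 g hg hgz u hu
  exact hirr u hu.1 ⟨s, a, b, sb, hs, hsb, heq⟩

theorem P2_imp_basis (hwf : WellFounded r) (htrans : Transitive r)
    (htri : ∀ u v : List X, r u v ∨ u = v ∨ r v u)
    (hmono : ∀ u v a b : List X, r u v → r (a ++ u ++ b) (a ++ v ++ b))
    (hmonic : ∀ s ∈ S, ∃ u : List X, IsLeadingWordR r s u ∧ coeffW s u = 1)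
    (hP2 : ∀ f : FreeAssocAlg k X, f ∈ TwoSidedIdeal.span S → f ≠ 0 →
      ∀ fb : List X, IsLeadingWordR r f fb →
        ∃ s ∈ S, ∃ a b sb : List X, IsLeadingWordR r s sb ∧ fb = a ++ sb ++ b) :
    ∃ bas : Module.Basis {u : List X // Irr r S u} k
        (FreeAssocAlg k X ⧸ Submodule.restrictScalars k
          (TwoSidedIdeal.asIdeal (TwoSidedIdeal.span S))),
      ∀ u, bas u = Submodule.Quotient.mk (monom k u.val) := by
  classical
  set J : Submodule k (FreeAssocAlg k X) :=
    Submodule.restrictScalars k (TwoSidedIdeal.asIdeal (TwoSidedIdeal.span S)) with hJ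
  have hmemJ : ∀ {x : FreeAssocAlg k X}, x ∈ J ↔ x ∈ TwoSidedIdeal.span S := by
    intro x
    rw [hJ, Submodule.restrictScalars_mem, TwoSidedIdeal.mem_asIdeal]
  have hli : LinearIndependent k (fun u : {u : List X // Irr r S u} =>
      Submodule.Quotient.mk (p := J) (monom k u.val)) := by
    rw [linearIndependent_iff']
    intro t c hsum0 i hit
    set g : FreeAssocAlg k X := ∑ u ∈ t, c u • monom k u.val with hg
    have hmk : Submodule.Quotient.mk (p := J) g = 0 := by
      have : J.mkQ g = ∑ u ∈ t, c u • J.mkQ (monom k u.val) := by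
        rw [hg, map_sum]
        exact Finset.sum_congr rfl fun u _ => map_smul _ _ _
      simp only [Submodule.mkQ_apply] at this
      rw [this]
      exact hsum0
    have hgJ : g ∈ TwoSidedIdeal.span S :=
      hmemJ.1 ((Submodule.Quotient.mk_eq_zero J).1 hmk)
    have hAB : ∀ x, coeffW g x ≠ 0 → Irr r S x := by
      intro x hx
      rw [hg, coeffW_sum] at hx
      obtain ⟨u, -, hu⟩ := Finset.exists_ne_zero_of_sum_ne_zero hx
      rw [coeffW_smul] at hu
      have := eq_of_coeffW_monom_ne_zero (right_ne_zero_of_mul hu)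
      rw [this]
      exact u.2
    have hg0 : g = 0 := zero_of_irr htrans htri hP2 g hgJ hAB
    have hci : coeffW g i.val = c i := by
      rw [hg, coeffW_sum, Finset.sum_eq_single i]
      · rw [coeffW_smul, coeffW_monom_self, mul_one]
      · intro u hu hne
        rw [coeffW_smul, coeffW_monom_ne (fun hEq => hne (Subtype.ext hEq)), mul_zero]
      · intro hni
        exact absurd hit hni
    rw [hg0] at hci
    simpa using hci.symm
  have hsp : ⊤ ≤ Submodule.span k (Set.range (fun u : {u : List X // Irr r S u} =>
      Submodule.Quotient.mk (p := J) (monom k u.val))) := by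
    rintro q -
    obtain ⟨f, rfl⟩ := Submodule.Quotient.mk_surjective J q
    rcases eq_or_ne f 0 with rfl | hf
    · rw [show Submodule.Quotient.mk (p := J) 0 = 0 from rfl]
      exact Submodule.zero_mem _
    · obtain ⟨u, hu⟩ := exists_lw htrans htri hf
      obtain ⟨g, h, hfe, hgirr, hrep⟩ := red hwf htrans htri hmono hmonic u f hu
      have hmkh : Submodule.Quotient.mk (p := J) h = 0 :=
        (Submodule.Quotient.mk_eq_zero J).2 (hmemJ.2 hrep.mem_span)
      have hmkf : Submodule.Quotient.mk (p := J) f = Submodule.Quotient.mk (p := J) g := by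
        have : J.mkQ f = J.mkQ g + J.mkQ h := by rw [hfe, map_add]
        simp only [Submodule.mkQ_apply] at this
        rw [this, hmkh, add_zero]
      rw [hmkf]
      have hgdec : g = ∑ x ∈ g.coeff.support, (g.coeff x) • monom k (FreeMonoid.toList x) := by
        conv_lhs => rw [← MonoidAlgebra.sum_coeff_single g]
        rw [Finsupp.sum]
        exact Finset.sum_congr rfl fun x _ => single_eq_smul_monom x (g.coeff x)
      have hmkg : Submodule.Quotient.mk (p := J) g =
          ∑ x ∈ g.coeff.support, (g.coeff x) • Submodule.Quotient.mk (p := J)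
            (monom k (FreeMonoid.toList x)) := by
        have : J.mkQ g = ∑ x ∈ g.coeff.support, (g.coeff x) • J.mkQ (monom k (FreeMonoid.toList x)) := by
          conv_lhs => rw [hgdec]
          rw [map_sum]
          exact Finset.sum_congr rfl fun x _ => map_smul _ _ _
        simpa only [Submodule.mkQ_apply] using this
      rw [hmkg]
      refine Submodule.sum_mem _ fun x hx => Submodule.smul_mem _ _ (Submodule.subset_span ?_)
      have hirr : Irr r S (FreeMonoid.toList x) :=
        (hgirr (FreeMonoid.toList x) (Finsupp.mem_support_iff.1 hx)).1
      exact ⟨⟨FreeMonoid.toList x, hirr⟩, rfl⟩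
  exact ⟨Module.Basis.mk hli hsp, fun u => Module.Basis.mk_apply hli hsp u⟩

theorem basis_imp_P1 (hwf : WellFounded r) (htrans : Transitive r)
    (htri : ∀ u v : List X, r u v ∨ u = v ∨ r v u)
    (hmono : ∀ u v a b : List X, r u v → r (a ++ u ++ b) (a ++ v ++ b))
    (hmonic : ∀ s ∈ S, ∃ u : List X, IsLeadingWordR r s u ∧ coeffW s u = 1)
    (hbas : ∃ bas : Module.Basis {u : List X // Irr r S u} k
        (FreeAssocAlg k X ⧸ Submodule.restrictScalars k
          (TwoSidedIdeal.asIdeal (TwoSidedIdeal.span S))),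
      ∀ u, bas u = Submodule.Quotient.mk (monom k u.val)) :
    IsGSBAssR r S := by
  classical
  set J : Submodule k (FreeAssocAlg k X) :=
    Submodule.restrictScalars k (TwoSidedIdeal.asIdeal (TwoSidedIdeal.span S)) with hJ
  obtain ⟨bas, hb⟩ := hbas
  have hmemJ : ∀ {x : FreeAssocAlg k X}, x ∈ J ↔ x ∈ TwoSidedIdeal.span S := by
    intro x
    rw [hJ, Submodule.restrictScalars_mem, TwoSidedIdeal.mem_asIdeal]
  have hli : LinearIndependent k (fun u : {u : List X // Irr r S u} =>
      Submodule.Quotient.mk (p := J) (monom k u.val)) := by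
    have h1 := bas.linearIndependent
    rwa [show (⇑bas) = fun u : {u : List X // Irr r S u} =>
      Submodule.Quotient.mk (p := J) (monom k u.val) from funext hb] at h1
  have hzero : ∀ g : FreeAssocAlg k X, g ∈ TwoSidedIdeal.span S →
      (∀ x, coeffW g x ≠ 0 → Irr r S x) → g = 0 := by
    intro g hg hirr
    by_contra hgz
    rw [linearIndependent_iff'] at hli
    have hinj : Set.InjOn (fun x : {x // x ∈ g.coeff.support} =>
        (⟨FreeMonoid.toList x.val, hirr _ (Finsupp.mem_support_iff.1 x.2)⟩ :
          {u : List X // Irr r S u})) g.coeff.support.attach := by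
      intro x _ y _ hxy
      simp only [Subtype.mk.injEq] at hxy
      exact Subtype.ext (FreeMonoid.toList.injective hxy)
    set t : Finset {u : List X // Irr r S u} := g.coeff.support.attach.image
      (fun x => ⟨FreeMonoid.toList x.val, hirr _ (Finsupp.mem_support_iff.1 x.2)⟩) with ht
    set c : {u : List X // Irr r S u} → k := fun u => coeffW g u.val with hc
    have hsum0 : ∑ u ∈ t, c u • Submodule.Quotient.mk (p := J) (monom k u.val) = 0 := by
      rw [ht, Finset.sum_image hinj]
      have step : ∀ x ∈ g.coeff.support.attach,
          c ⟨FreeMonoid.toList x.val, hirr _ (Finsupp.mem_support_iff.1 x.2)⟩ •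
            Submodule.Quotient.mk (p := J)
              (monom k ((⟨FreeMonoid.toList x.val, hirr _ (Finsupp.mem_support_iff.1 x.2)⟩ :
                {u : List X // Irr r S u}).val)) =
          J.mkQ ((g.coeff x.val) • monom k (FreeMonoid.toList x.val)) := by
        intro x _
        rw [map_smul]
        simp only [Submodule.mkQ_apply]
        rfl
      rw [Finset.sum_congr rfl step, ← map_sum]
      have h3 : (∑ x ∈ g.coeff.support.attach, (g.coeff x.val) • monom k (FreeMonoid.toList x.val)) = g := by
        rw [Finset.sum_attach g.coeff.support (fun y => (g.coeff y) • monom k (FreeMonoid.toList y))]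
        conv_rhs => rw [← MonoidAlgebra.sum_coeff_single g]
        rw [Finsupp.sum]
        exact Finset.sum_congr rfl fun y _ => (single_eq_smul_monom y (g.coeff y)).symm
      rw [h3, Submodule.mkQ_apply]
      exact (Submodule.Quotient.mk_eq_zero J).2 (hmemJ.2 hg)
    obtain ⟨x₀, hx₀⟩ := Finsupp.support_nonempty_iff.2 (mt MonoidAlgebra.coeff_eq_zero.1 hgz)
    have hmem : (⟨FreeMonoid.toList x₀, hirr _ (Finsupp.mem_support_iff.1 hx₀)⟩ :
        {u : List X // Irr r S u}) ∈ t := by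
      rw [ht]
      exact Finset.mem_image.2 ⟨⟨x₀, hx₀⟩, Finset.mem_attach _ _, rfl⟩
    have := hli t c hsum0 _ hmem
    rw [hc] at this
    exact Finsupp.mem_support_iff.1 hx₀ this
  -- now verify triviality of all compositions
  intro f g fbar gbar w sh p hfS hgS hlf hlg hcomp
  have hf1 : coeffW f fbar = 1 := lw_monic hwf hmonic hfS hlf
  have hg1 : coeffW g gbar = 1 := lw_monic hwf hmonic hgS hlg
  have key : p ∈ TwoSidedIdeal.span S ∧ (∀ x, coeffW p x ≠ 0 → r x w) := by
    cases sh with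
    | incl a b =>
      obtain ⟨hw1, hw2, hp⟩ := hcomp
      constructor
      · rw [hp]
        exact TwoSidedIdeal.sub_mem _ (TwoSidedIdeal.subset_span hfS)
          (sandwich_mem_span hgS a b)
      · intro x hx
        rw [hp, coeffW_sub] at hx
        rcases eq_or_ne x w with hxw | hxw
        · exfalso
          rw [hxw] at hx
          have hcf : coeffW f w = 1 := by rw [hw1]; exact hf1
          have hcs : coeffW (monom k a * g * monom k b) w = 1 := by
            rw [hw2, coeffW_sandwich]
            exact hg1
          rw [hcf, hcs] at hx
          simp at hx
        · have hor : coeffW f x ≠ 0 ∨ coeffW (monom k a * g * monom k b) x ≠ 0 := by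
            by_contra hcon
            push_neg at hcon
            rw [hcon.1, hcon.2, sub_zero] at hx
            exact hx rfl
          rcases hor with h | h
          · rcases hlf.2 x h with h' | h'
            · exact absurd (h'.trans hw1.symm) hxw
            · rwa [← hw1] at h'
          · obtain ⟨t', heq, ht'⟩ := coeffW_sandwich_ne_zero h
            rcases hlg.2 t' ht' with h' | h'
            · exact absurd (by rw [heq, h', ← hw2]) hxw
            · rw [heq, hw2]
              exact hmono _ _ _ _ h'
    | inter a b =>
      obtain ⟨hw1, hw2, hlen, hp⟩ := hcomp
      constructor
      · rw [hp]
        exact TwoSidedIdeal.sub_mem _ (TwoSidedIdeal.mul_mem_right _ _ _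
          (TwoSidedIdeal.subset_span hfS))
          (TwoSidedIdeal.mul_mem_left _ _ _ (TwoSidedIdeal.subset_span hgS))
      · intro x hx
        rw [hp, coeffW_sub] at hx
        rcases eq_or_ne x w with hxw | hxw
        · exfalso
          rw [hxw] at hx
          rw [show coeffW (f * monom k b) w = 1 from by rw [hw1, coeffW_mul_monom, hf1]] at hx
          rw [show coeffW (monom k a * g) w = 1 from by rw [hw2, coeffW_monom_mul, hg1]] at hx
          simp at hx
        · have hor : coeffW (f * monom k b) x ≠ 0 ∨ coeffW (monom k a * g) x ≠ 0 := by
            by_contra hcon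
            push_neg at hcon
            rw [hcon.1, hcon.2, sub_zero] at hx
            exact hx rfl
          rcases hor with h | h
          · by_cases hex : ∃ u', x = u' ++ b
            · obtain ⟨u', rfl⟩ := hex
              rw [coeffW_mul_monom] at h
              rcases hlf.2 u' h with h' | h'
              · exact absurd (by rw [h', ← hw1]) hxw
              · rw [hw1]
                exact hmono u' fbar [] b h'
            · exact absurd (coeffW_mul_monom_eq_zero f hex) h
          · by_cases hex : ∃ u', x = a ++ u'
            · obtain ⟨u', rfl⟩ := hex
              rw [coeffW_monom_mul] at h
              rcases hlg.2 u' h with h' | h'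
              · exact absurd (by rw [h', ← hw2]) hxw
              · rw [hw2]
                have := hmono u' gbar a [] h'
                simpa using this
            · exact absurd (coeffW_monom_mul_eq_zero g hex) h
  rcases eq_or_ne p 0 with rfl | hp0
  · exact trivialModAssR_iff_repB.2 (RepB.zero _)
  · obtain ⟨u, hu⟩ := exists_lw htrans htri hp0
    have hru : r u w := key.2 u hu.1
    obtain ⟨g', h', hfe, hg'irr, hrep⟩ := red hwf htrans htri hmono hmonic u p hu
    have hg'span : g' ∈ TwoSidedIdeal.span S := by
      have hgeq : g' = p - h' := by rw [hfe]; abel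
      rw [hgeq]
      exact TwoSidedIdeal.sub_mem _ key.1 hrep.mem_span
    have hg'0 : g' = 0 := hzero g' hg'span (fun x hx => (hg'irr x hx).1)
    have hpe : p = h' := by rw [hfe, hg'0, zero_add]
    rw [trivialModAssR_iff_repB, hpe]
    exact hrep.mono (fun x' hx' => rle_of_rle_of_r htrans hx' hru)

end CD

/-- Composition–Diamond lemma for associative algebras;
Shirshov, Bokut, Bergman.  For a nonempty set `S` of monic polynomials in
`k⟨X⟩` and a monomial well-order `<` (here `r u v` means `u < v`), `S` is a
Gröbner–Shirshov basis iff the leading word of every nonzero element of the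
two-sided ideal `Id(S)` has the form `a s̄ b`; and either condition is
equivalent to the `S`-irreducible words forming a `k`-basis of `k⟨X⟩/Id(S)`. -/
theorem composition_diamond_assoc {k X : Type*} [Field k]
    (r : List X → List X → Prop)
    (hwf : WellFounded r) (htrans : Transitive r)
    (htri : ∀ u v : List X, r u v ∨ u = v ∨ r v u)
    (hmono : ∀ u v a b : List X, r u v → r (a ++ u ++ b) (a ++ v ++ b))
    (S : Set (FreeAssocAlg k X)) (hne : S.Nonempty)
    (hmonic : ∀ s ∈ S, ∃ u : List X, IsLeadingWordR r s u ∧ coeffW s u = 1) :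
    (IsGSBAssR r S ↔
      ∀ f : FreeAssocAlg k X, f ∈ TwoSidedIdeal.span S → f ≠ 0 →
        ∀ fb : List X, IsLeadingWordR r f fb →
          ∃ s ∈ S, ∃ a b sb : List X, IsLeadingWordR r s sb ∧ fb = a ++ sb ++ b) ∧
    ((∀ f : FreeAssocAlg k X, f ∈ TwoSidedIdeal.span S → f ≠ 0 →
        ∀ fb : List X, IsLeadingWordR r f fb →
          ∃ s ∈ S, ∃ a b sb : List X, IsLeadingWordR r s sb ∧ fb = a ++ sb ++ b) ↔
      ∃ bas : Module.Basis
          {u : List X // ¬ ∃ (s : FreeAssocAlg k X) (a b sb : List X),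
            s ∈ S ∧ IsLeadingWordR r s sb ∧ u = a ++ sb ++ b} k
          (FreeAssocAlg k X ⧸ Submodule.restrictScalars k
            (TwoSidedIdeal.asIdeal (TwoSidedIdeal.span S))),
        ∀ u, bas u = Submodule.Quotient.mk (monom k u.val)) := by
  constructor
  · constructor
    · exact fun hGSB => CD.P1_imp_P2 hwf htrans htri hmono hmonic hGSB
    · intro hP2
      exact CD.basis_imp_P1 hwf htrans htri hmono hmonic
        (CD.P2_imp_basis hwf htrans htri hmono hmonic hP2)
  · constructor
    · intro hP2
      exact CD.P2_imp_basis hwf htrans htri hmono hmonic hP2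
    · intro hbas
      exact CD.P1_imp_P2 hwf htrans htri hmono hmonic
        (CD.basis_imp_P1 hwf htrans htri hmono hmonic hbas)
end
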